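/- arXiv:2210.14856 — 11 statements merged into one kernel-verified Lean document; each statement's English description precedes it below -/
import Mathlib

section
/- Let S be an Arf numerical semigroup with multiplicity 3 and conductor s ≥ 3 with s ≡ 0 (mod 3). Then S = ⟨3, s+1, s+2⟩, PF(S) = {s−2, s−1}, the unique RF-matrix of s−2 is the 3×3 matrix with rows (−1, 1, 0), ((s−3)/3, −1, 1), (2s/3, 0, −1), and the unique RF-matrix of s−1 is the 3×3 matrix with rows (−1, 0, 1), (2s/3, −1, 0), (s/3, 1, −1). -/
/-- `S ⊆ ℕ` is a numerical semigroup: contains `0`, closed under addition,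
and has finite complement in `ℕ`. -/
def IsNumericalSemigroup (S : Set ℕ) : Prop :=
  0 ∈ S ∧ (∀ a ∈ S, ∀ b ∈ S, a + b ∈ S) ∧ (Sᶜ).Finite

/-- `S` satisfies the Arf condition: for `x ≤ y` in `S`, `2y - x ∈ S`. -/
def IsArf (S : Set ℕ) : Prop :=
  ∀ x ∈ S, ∀ y ∈ S, x ≤ y → 2 * y - x ∈ S

/-- `m` is the multiplicity of `S`: the smallest nonzero element. -/
def HasMultiplicity (S : Set ℕ) (m : ℕ) : Prop :=
  m ∈ S ∧ m ≠ 0 ∧ ∀ n ∈ S, n ≠ 0 → m ≤ n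

/-- `s` is the conductor of `S`: the least `t` with `[t, ∞) ⊆ S`. -/
def HasConductor (S : Set ℕ) (s : ℕ) : Prop :=
  (∀ n, s ≤ n → n ∈ S) ∧ ∀ t, (∀ n, t ≤ n → n ∈ S) → s ≤ t

/-- The set of pseudo-Frobenius numbers of `S`. -/
def pseudoFrobeniusSet (S : Set ℕ) : Set ℕ :=
  {z | z ∉ S ∧ ∀ n ∈ S, n ≠ 0 → z + n ∈ S}

/-- `A` is a row-factorization (RF-) matrix of `f` with respect to generators `n`:
diagonal entries are `-1`, off-diagonal entries are nonnegative, and every row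
gives a representation of `f` in terms of the generators. -/
def IsRFMatrix {e : ℕ} (n : Fin e → ℕ) (f : ℤ) (A : Matrix (Fin e) (Fin e) ℤ) : Prop :=
  (∀ i, A i i = -1) ∧ (∀ i j, i ≠ j → 0 ≤ A i j) ∧
    (∀ i, f = ∑ j, A i j * (n j : ℤ))

lemma le_one_aux (u c r : ℤ) (hu : 0 ≤ u) (hc : 0 < c) (hbound : u * c ≤ r)
    (hr : r < 2 * c) : u ≤ 1 := by
  by_contra h
  push_neg at h
  have h2 : (2 : ℤ) ≤ u := h
  have : 2 * c ≤ u * c := mul_le_mul_of_nonneg_right h2 (le_of_lt hc)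
  linarith

lemma fin3cases : ∀ i : Fin 3, i = 0 ∨ i = 1 ∨ i = 2 := by decide

lemma arf_key (S : Set ℕ) (s : ℕ)
    (hNS : IsNumericalSemigroup S) (hArf : IsArf S)
    (hmul : HasMultiplicity S 3) (hcon : HasConductor S s)
    (hs : 3 ≤ s) (hmod : s % 3 = 0) :
    S = {n : ℕ | n % 3 = 0 ∨ s ≤ n} := by
  obtain ⟨h0, hadd, -⟩ := hNS
  obtain ⟨h3, -, hmin⟩ := hmul
  obtain ⟨hge, hlub⟩ := hcon
  have hmul3 : ∀ k, 3 * k ∈ S := by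
    intro k
    induction k with
    | zero => simpa using h0
    | succ k ih =>
        have e : 3 * (k + 1) = 3 * k + 3 := by ring
        rw [e]; exact hadd _ ih _ h3
  have hmod0 : ∀ n, n % 3 = 0 → n ∈ S := by
    intro n hn
    have e : n = 3 * (n / 3) := by omega
    rw [e]; exact hmul3 _
  ext n
  simp only [Set.mem_setOf_eq]
  constructor
  · intro hn
    by_contra hcontra
    push_neg at hcontra
    obtain ⟨hn3, hns⟩ := hcontra
    have hn0 : n ≠ 0 := by omega
    have hn3' : 3 ≤ n := hmin n hn hn0
    have haddk : ∀ m ∈ S, ∀ k, m + 3 * k ∈ S := fun m hm k => hadd m hm _ (hmul3 k)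
    have key1 : s - 1 ∈ S := by
      rcases (by omega : n % 3 = 1 ∨ n % 3 = 2) with h1 | h2
      · have hy : n + 2 ∈ S := hmod0 _ (by omega)
        have h4 : n + 4 ∈ S := by
          have := hArf n hn (n + 2) hy (by omega)
          have e : 2 * (n + 2) - n = n + 4 := by omega
          rwa [e] at this
        have hcov : ∀ m, n + 3 ≤ m → m ∈ S := by
          intro m hm
          rcases (by omega : m % 3 = 0 ∨ m % 3 = 1 ∨ m % 3 = 2) with h | h | h
          · exact hmod0 _ h
          · have e : m = n + 3 * ((m - n) / 3) := by omega
            rw [e]; exact haddk _ hn _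
          · have e : m = (n + 4) + 3 * ((m - (n + 4)) / 3) := by omega
            rw [e]; exact haddk _ h4 _
        have hle := hlub _ hcov
        have hn' : n = s - 2 := by omega
        have hs3 : s - 3 ∈ S := hmod0 _ (by omega)
        have := hArf (s - 3) hs3 n hn (by omega)
        have e : 2 * n - (s - 3) = s - 1 := by omega
        rwa [e] at this
      · have hy : n + 1 ∈ S := hmod0 _ (by omega)
        have h2' : n + 2 ∈ S := by
          have := hArf n hn (n + 1) hy (by omega)
          have e : 2 * (n + 1) - n = n + 2 := by omega
          rwa [e] at this
        have hcov : ∀ m, n + 2 ≤ m → m ∈ S := by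
          intro m hm
          rcases (by omega : m % 3 = 0 ∨ m % 3 = 1 ∨ m % 3 = 2) with h | h | h
          · exact hmod0 _ h
          · have e : m = (n + 2) + 3 * ((m - (n + 2)) / 3) := by omega
            rw [e]; exact haddk _ h2' _
          · have e : m = n + 3 * ((m - n) / 3) := by omega
            rw [e]; exact haddk _ hn _
        have hle := hlub _ hcov
        have e : n = s - 1 := by omega
        rwa [e] at hn
    have hfin := hlub (s - 1) (fun m hm => by
      rcases (by omega : m = s - 1 ∨ s ≤ m) with h | h
      · rw [h]; exact key1
      · exact hge _ h)
    omega
  · intro h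
    rcases h with h | h
    · exact hmod0 _ h
    · exact hge _ h

/-- Arf numerical semigroup with multiplicity `3`, conductor `s ≥ 3`,
`s ≡ 0 (mod 3)`: `S = ⟨3, s+1, s+2⟩`, `PF(S) = {s-2, s-1}`, and the unique RF-matrices
of `s-2` and `s-1` are as displayed. -/
theorem arf_mult_three_mod_zero (S : Set ℕ) (s : ℕ)
    (hNS : IsNumericalSemigroup S) (hArf : IsArf S)
    (hmul : HasMultiplicity S 3) (hcon : HasConductor S s)
    (hs : 3 ≤ s) (hmod : s % 3 = 0) :
    S = (AddSubmonoid.closure ({3, s + 1, s + 2} : Set ℕ) : Set ℕ) ∧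
    pseudoFrobeniusSet S = {s - 2, s - 1} ∧
    (∀ A : Matrix (Fin 3) (Fin 3) ℤ,
      IsRFMatrix ![3, s + 1, s + 2] ((s : ℤ) - 2) A ↔
        A = !![-1, 1, 0; ((s : ℤ) - 3) / 3, -1, 1; 2 * (s : ℤ) / 3, 0, -1]) ∧
    (∀ A : Matrix (Fin 3) (Fin 3) ℤ,
      IsRFMatrix ![3, s + 1, s + 2] ((s : ℤ) - 1) A ↔
        A = !![-1, 0, 1; 2 * (s : ℤ) / 3, -1, 0; (s : ℤ) / 3, 1, -1]) := by
  have hSset := arf_key S s hNS hArf hmul hcon hs hmod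
  have hsZ : (3 : ℤ) ≤ (s : ℤ) := by exact_mod_cast hs
  refine ⟨?_, ?_, ?_, ?_⟩
  · -- Part 1 : S = closure {3, s+1, s+2}
    rw [hSset]
    ext n
    simp only [Set.mem_setOf_eq, SetLike.mem_coe]
    constructor
    · intro h
      have g3 : (3 : ℕ) ∈ AddSubmonoid.closure ({3, s + 1, s + 2} : Set ℕ) :=
        AddSubmonoid.subset_closure (by simp)
      have g1 : s + 1 ∈ AddSubmonoid.closure ({3, s + 1, s + 2} : Set ℕ) :=
        AddSubmonoid.subset_closure (by simp)
      have g2 : s + 2 ∈ AddSubmonoid.closure ({3, s + 1, s + 2} : Set ℕ) :=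
        AddSubmonoid.subset_closure (by simp)
      have gm : ∀ k, 3 * k ∈ AddSubmonoid.closure ({3, s + 1, s + 2} : Set ℕ) := by
        intro k
        have := nsmul_mem g3 k
        simpa [smul_eq_mul, mul_comm] using this
      rcases h with h | h
      · have e : n = 3 * (n / 3) := by omega
        rw [e]; exact gm _
      · rcases (by omega : n % 3 = 0 ∨ n % 3 = 1 ∨ n % 3 = 2) with h0 | h1 | h2
        · have e : n = 3 * (n / 3) := by omega
          rw [e]; exact gm _
        · have e : n = (s + 1) + 3 * ((n - (s + 1)) / 3) := by omega
          rw [e]; exact add_mem g1 (gm _)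
        · have e : n = (s + 2) + 3 * ((n - (s + 2)) / 3) := by omega
          rw [e]; exact add_mem g2 (gm _)
    · intro h
      refine AddSubmonoid.closure_induction (fun x hx => ?_) ?_
        (fun x y hx hy px py => ?_) h
      · simp only [Set.mem_insert_iff, Set.mem_singleton_iff] at hx
        omega
      · omega
      · omega
  · -- Part 2 : PF(S) = {s-2, s-1}
    ext z
    simp only [pseudoFrobeniusSet, hSset, Set.mem_setOf_eq, Set.mem_insert_iff,
      Set.mem_singleton_iff]
    constructor
    · rintro ⟨hz, hall⟩
      have h3 := hall 3 (Or.inl (by norm_num)) (by norm_num)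
      omega
    · intro hz
      refine ⟨by omega, ?_⟩
      intro n hn hn0
      omega
  · -- Part 3 : RF-matrix of s-2
    intro A
    constructor
    · rintro ⟨hd, hnn, hrow⟩
      have e0 := hrow 0
      have e1 := hrow 1
      have e2 := hrow 2
      simp only [Fin.sum_univ_three, Matrix.cons_val_zero, Matrix.cons_val_one,
        Matrix.head_cons, Matrix.cons_val_two, Matrix.tail_cons, Nat.cast_ofNat,
        Nat.cast_add, Nat.cast_one] at e0 e1 e2
      rw [hd 0] at e0
      rw [hd 1] at e1
      rw [hd 2] at e2
      have n01 := hnn 0 1 (by decide)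
      have n02 := hnn 0 2 (by decide)
      have n10 := hnn 1 0 (by decide)
      have n12 := hnn 1 2 (by decide)
      have n20 := hnn 2 0 (by decide)
      have n21 := hnn 2 1 (by decide)
      have p01 : 0 ≤ A 0 1 * ((s : ℤ) + 1) := mul_nonneg n01 (by linarith)
      have p02 : 0 ≤ A 0 2 * ((s : ℤ) + 2) := mul_nonneg n02 (by linarith)
      have b01 : A 0 1 ≤ 1 :=
        le_one_aux (A 0 1) ((s : ℤ) + 1) ((s : ℤ) + 1) n01 (by linarith) (by linarith) (by linarith)
      have b02 : A 0 2 ≤ 1 :=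
        le_one_aux (A 0 2) ((s : ℤ) + 2) ((s : ℤ) + 1) n02 (by linarith) (by linarith) (by linarith)
      have h0 : A 0 1 = 1 ∧ A 0 2 = 0 := by
        rcases (by omega : A 0 1 = 0 ∨ A 0 1 = 1) with h | h <;>
          rcases (by omega : A 0 2 = 0 ∨ A 0 2 = 1) with h' | h' <;>
            rw [h, h'] at e0 <;>
              first
                | exact ⟨h, h'⟩
                | (exfalso; omega)
      have p10 : 0 ≤ A 1 0 * (3 : ℤ) := mul_nonneg n10 (by norm_num)
      have b12 : A 1 2 ≤ 1 :=
        le_one_aux (A 1 2) ((s : ℤ) + 2) (2 * (s : ℤ) - 1) n12 (by linarith) (by linarith) (by linarith)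
      have h1 : A 1 0 = ((s : ℤ) - 3) / 3 ∧ A 1 2 = 1 := by
        rcases (by omega : A 1 2 = 0 ∨ A 1 2 = 1) with h | h <;> rw [h] at e1
        · exfalso; omega
        · exact ⟨by omega, h⟩
      have p20 : 0 ≤ A 2 0 * (3 : ℤ) := mul_nonneg n20 (by norm_num)
      have b21 : A 2 1 ≤ 1 :=
        le_one_aux (A 2 1) ((s : ℤ) + 1) (2 * (s : ℤ)) n21 (by linarith) (by linarith) (by linarith)
      have h2 : A 2 0 = 2 * (s : ℤ) / 3 ∧ A 2 1 = 0 := by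
        rcases (by omega : A 2 1 = 0 ∨ A 2 1 = 1) with h | h <;> rw [h] at e2
        · exact ⟨by omega, h⟩
        · exfalso; omega
      have d0 := hd 0
      have d1 := hd 1
      have d2 := hd 2
      obtain ⟨h01, h02⟩ := h0
      obtain ⟨h10, h12⟩ := h1
      obtain ⟨h20, h21⟩ := h2
      ext i j
      rcases fin3cases i with rfl | rfl | rfl <;> rcases fin3cases j with rfl | rfl | rfl <;>
        simp <;>
        first
          | exact d0 | exact d1 | exact d2
          | exact h01 | exact h02 | exact h10 | exact h12 | exact h20 | exact h21
    · rintro rfl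
      refine ⟨fun i => ?_, fun i j hij => ?_, fun i => ?_⟩
      · rcases fin3cases i with rfl | rfl | rfl <;> simp
      · rcases fin3cases i with rfl | rfl | rfl <;> rcases fin3cases j with rfl | rfl | rfl <;>
          simp <;>
          first
            | exact absurd rfl hij
            | omega
      · rcases fin3cases i with rfl | rfl | rfl <;>
          simp [Fin.sum_univ_three] <;> omega
  · -- Part 4 : RF-matrix of s-1
    intro A
    constructor
    · rintro ⟨hd, hnn, hrow⟩
      have e0 := hrow 0
      have e1 := hrow 1
      have e2 := hrow 2
      simp only [Fin.sum_univ_three, Matrix.cons_val_zero, Matrix.cons_val_one,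
        Matrix.head_cons, Matrix.cons_val_two, Matrix.tail_cons, Nat.cast_ofNat,
        Nat.cast_add, Nat.cast_one] at e0 e1 e2
      rw [hd 0] at e0
      rw [hd 1] at e1
      rw [hd 2] at e2
      have n01 := hnn 0 1 (by decide)
      have n02 := hnn 0 2 (by decide)
      have n10 := hnn 1 0 (by decide)
      have n12 := hnn 1 2 (by decide)
      have n20 := hnn 2 0 (by decide)
      have n21 := hnn 2 1 (by decide)
      have p01 : 0 ≤ A 0 1 * ((s : ℤ) + 1) := mul_nonneg n01 (by linarith)
      have p02 : 0 ≤ A 0 2 * ((s : ℤ) + 2) := mul_nonneg n02 (by linarith)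
      have b01 : A 0 1 ≤ 1 :=
        le_one_aux (A 0 1) ((s : ℤ) + 1) ((s : ℤ) + 2) n01 (by linarith) (by linarith) (by linarith)
      have b02 : A 0 2 ≤ 1 :=
        le_one_aux (A 0 2) ((s : ℤ) + 2) ((s : ℤ) + 2) n02 (by linarith) (by linarith) (by linarith)
      have h0 : A 0 1 = 0 ∧ A 0 2 = 1 := by
        rcases (by omega : A 0 1 = 0 ∨ A 0 1 = 1) with h | h <;>
          rcases (by omega : A 0 2 = 0 ∨ A 0 2 = 1) with h' | h' <;>
            rw [h, h'] at e0 <;>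
              first
                | exact ⟨h, h'⟩
                | (exfalso; omega)
      have p10 : 0 ≤ A 1 0 * (3 : ℤ) := mul_nonneg n10 (by norm_num)
      have b12 : A 1 2 ≤ 1 :=
        le_one_aux (A 1 2) ((s : ℤ) + 2) (2 * (s : ℤ)) n12 (by linarith) (by linarith) (by linarith)
      have h1 : A 1 0 = 2 * (s : ℤ) / 3 ∧ A 1 2 = 0 := by
        rcases (by omega : A 1 2 = 0 ∨ A 1 2 = 1) with h | h <;> rw [h] at e1
        · exact ⟨by omega, h⟩
        · exfalso; omega
      have p20 : 0 ≤ A 2 0 * (3 : ℤ) := mul_nonneg n20 (by norm_num)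
      have b21 : A 2 1 ≤ 1 :=
        le_one_aux (A 2 1) ((s : ℤ) + 1) (2 * (s : ℤ) + 1) n21 (by linarith) (by linarith) (by linarith)
      have h2 : A 2 0 = (s : ℤ) / 3 ∧ A 2 1 = 1 := by
        rcases (by omega : A 2 1 = 0 ∨ A 2 1 = 1) with h | h <;> rw [h] at e2
        · exfalso; omega
        · exact ⟨by omega, h⟩
      have d0 := hd 0
      have d1 := hd 1
      have d2 := hd 2
      obtain ⟨h01, h02⟩ := h0
      obtain ⟨h10, h12⟩ := h1
      obtain ⟨h20, h21⟩ := h2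
      ext i j
      rcases fin3cases i with rfl | rfl | rfl <;> rcases fin3cases j with rfl | rfl | rfl <;>
        simp <;>
        first
          | exact d0 | exact d1 | exact d2
          | exact h01 | exact h02 | exact h10 | exact h12 | exact h20 | exact h21
    · rintro rfl
      refine ⟨fun i => ?_, fun i j hij => ?_, fun i => ?_⟩
      · rcases fin3cases i with rfl | rfl | rfl <;> simp
      · rcases fin3cases i with rfl | rfl | rfl <;> rcases fin3cases j with rfl | rfl | rfl <;>
          simp <;>
          first
            | exact absurd rfl hij
            | omega
      · rcases fin3cases i with rfl | rfl | rfl <;>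
          simp [Fin.sum_univ_three] <;> omega
end

section
/- Let S be an Arf numerical semigroup with multiplicity 3 and conductor s > 3 with s ≡ 2 (mod 3). Then S = ⟨3, s, s+2⟩, PF(S) = {s−3, s−1}, the unique RF-matrix of s−3 is the 3×3 matrix with rows (−1, 1, 0), ((s−5)/3, −1, 1), ((2s−1)/3, 0, −1), and the unique RF-matrix of s−1 is the 3×3 matrix with rows (−1, 0, 1), ((2s−1)/3, −1, 0), ((s+1)/3, 1, −1). -/
/-- Arf numerical semigroup with multiplicity `3`, conductor `s > 3`,
`s ≡ 2 (mod 3)`: `S = ⟨3, s, s+2⟩`, `PF(S) = {s-3, s-1}`, and the unique RF-matrices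
of `s-3` and `s-1` are as displayed. -/
theorem arf_mult_three_mod_two (S : Set ℕ) (s : ℕ)
    (hNS : IsNumericalSemigroup S) (hArf : IsArf S)
    (hmul : HasMultiplicity S 3) (hcon : HasConductor S s)
    (hs : 3 < s) (hmod : s % 3 = 2) :
    S = (AddSubmonoid.closure ({3, s, s + 2} : Set ℕ) : Set ℕ) ∧
    pseudoFrobeniusSet S = {s - 3, s - 1} ∧
    (∀ A : Matrix (Fin 3) (Fin 3) ℤ,
      IsRFMatrix ![3, s, s + 2] ((s : ℤ) - 3) A ↔
        A = !![-1, 1, 0; ((s : ℤ) - 5) / 3, -1, 1; (2 * (s : ℤ) - 1) / 3, 0, -1]) ∧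
    (∀ A : Matrix (Fin 3) (Fin 3) ℤ,
      IsRFMatrix ![3, s, s + 2] ((s : ℤ) - 1) A ↔
        A = !![-1, 0, 1; (2 * (s : ℤ) - 1) / 3, -1, 0; ((s : ℤ) + 1) / 3, 1, -1]) := by
  obtain ⟨h0, hadd, -⟩ := hNS
  obtain ⟨h3, -, hmin⟩ := hmul
  obtain ⟨hge, hminc⟩ := hcon
  -- all multiples of 3 are in S
  have hm3S : ∀ k : ℕ, 3 * k ∈ S := by
    intro k
    induction k with
    | zero => simpa using h0
    | succ m ih =>
      have := hadd _ ih _ h3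
      have e : 3 * (m + 1) = 3 * m + 3 := by ring
      rwa [e]
  have hmem3 : ∀ n : ℕ, n % 3 = 0 → n ∈ S := by
    intro n hn
    obtain ⟨k, rfl⟩ : ∃ k, n = 3 * k := ⟨n / 3, by omega⟩
    exact hm3S k
  -- s - 1 is not in S
  have hs1 : s - 1 ∉ S := by
    intro h
    have := hminc (s - 1) (fun n hn => by
      rcases eq_or_lt_of_le hn with h' | h'
      · rwa [← h']
      · exact hge n (by omega))
    omega
  -- elements of S with residue 1 are ≥ s
  have key1 : ∀ x ∈ S, x % 3 = 1 → s ≤ x := by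
    intro x hx hx1
    by_contra h
    push_neg at h
    apply hs1
    have e : s - 1 = x + 3 * ((s - 1 - x) / 3) := by omega
    rw [e]
    exact hadd _ hx _ (hmem3 _ (by omega))
  -- elements of S with residue 2 are ≥ s
  have key2 : ∀ x ∈ S, x % 3 = 2 → s ≤ x := by
    intro x hx hx2
    by_contra h
    push_neg at h
    have hx1S : x + 1 ∈ S := hmem3 _ (by omega)
    have h2 : 2 * (x + 1) - x ∈ S := hArf x hx (x + 1) hx1S (by omega)
    have e : 2 * (x + 1) - x = x + 2 := by omega
    rw [e] at h2
    have := key1 _ h2 (by omega)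
    omega
  -- the structure of S
  have hSeq : S = {n : ℕ | n % 3 = 0 ∨ s ≤ n} := by
    ext n
    constructor
    · intro hn
      rcases (by omega : n % 3 = 0 ∨ n % 3 = 1 ∨ n % 3 = 2) with h | h | h
      · exact Or.inl h
      · exact Or.inr (key1 _ hn h)
      · exact Or.inr (key2 _ hn h)
    · rintro (h | h)
      · exact hmem3 _ h
      · exact hge _ h
  refine ⟨?_, ?_, ?_, ?_⟩
  · -- closure equality
    apply le_antisymm
    · -- S ⊆ closure
      intro n hn
      rw [hSeq] at hn
      have h3c : (3 : ℕ) ∈ AddSubmonoid.closure ({3, s, s + 2} : Set ℕ) :=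
        AddSubmonoid.subset_closure (by simp)
      have hsc : s ∈ AddSubmonoid.closure ({3, s, s + 2} : Set ℕ) :=
        AddSubmonoid.subset_closure (by simp)
      have hs2c : s + 2 ∈ AddSubmonoid.closure ({3, s, s + 2} : Set ℕ) :=
        AddSubmonoid.subset_closure (by simp)
      have hm3 : ∀ k : ℕ, 3 * k ∈ AddSubmonoid.closure ({3, s, s + 2} : Set ℕ) := by
        intro k
        have := nsmul_mem h3c k
        simpa [smul_eq_mul, mul_comm] using this
      rcases hn with h | h
      · obtain ⟨k, rfl⟩ : ∃ k, n = 3 * k := ⟨n / 3, by omega⟩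
        exact hm3 k
      · rcases (by omega : n % 3 = 0 ∨ n % 3 = 1 ∨ n % 3 = 2) with h1 | h1 | h1
        · obtain ⟨k, rfl⟩ : ∃ k, n = 3 * k := ⟨n / 3, by omega⟩
          exact hm3 k
        · obtain ⟨k, rfl⟩ : ∃ k, n = (s + 2) + 3 * k := ⟨(n - (s + 2)) / 3, by omega⟩
          exact AddSubmonoid.add_mem _ hs2c (hm3 k)
        · obtain ⟨k, rfl⟩ : ∃ k, n = s + 3 * k := ⟨(n - s) / 3, by omega⟩
          exact AddSubmonoid.add_mem _ hsc (hm3 k)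
    · -- closure ⊆ S
      intro x hx
      have hM : AddSubmonoid.closure ({3, s, s + 2} : Set ℕ) ≤
          AddSubmonoid.mk ⟨S, fun {a b} ha hb => hadd a ha b hb⟩ h0 := by
        rw [AddSubmonoid.closure_le]
        intro y hy
        simp only [Set.mem_insert_iff, Set.mem_singleton_iff] at hy
        rcases hy with rfl | rfl | rfl
        · exact h3
        · exact hge _ le_rfl
        · exact hge _ (by omega)
      exact hM hx
  · -- pseudo-Frobenius set
    ext z
    simp only [pseudoFrobeniusSet, hSeq, Set.mem_setOf_eq, Set.mem_insert_iff,
      Set.mem_singleton_iff]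
    constructor
    · rintro ⟨hz, hall⟩
      have h3' := hall 3 (Or.inl rfl) (by norm_num)
      omega
    · intro hz
      refine ⟨by omega, ?_⟩
      intro n hn hn0
      rcases hn with h | h <;> [right; right] <;> omega
  · -- RF matrix of s - 3
    intro A
    constructor
    · rintro ⟨hd, ho, hr⟩
      have e0 := hr 0
      have e1 := hr 1
      have e2 := hr 2
      simp [Fin.sum_univ_three] at e0 e1 e2
      rw [hd 0] at e0
      rw [hd 1] at e1
      rw [hd 2] at e2
      have hb0 : 0 ≤ A 0 1 := ho 0 1 (by decide)
      have hc0 : 0 ≤ A 0 2 := ho 0 2 (by decide)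
      have ha1 : 0 ≤ A 1 0 := ho 1 0 (by decide)
      have hc1 : 0 ≤ A 1 2 := ho 1 2 (by decide)
      have ha2 : 0 ≤ A 2 0 := ho 2 0 (by decide)
      have hb2 : 0 ≤ A 2 1 := ho 2 1 (by decide)
      -- bounds
      have B01 : A 0 1 ≤ 3 := by
        by_contra h; push_neg at h
        have h1 : (4:ℤ) * s ≤ A 0 1 * s := mul_le_mul_of_nonneg_right (by omega) (by omega)
        have h2 : (0:ℤ) ≤ A 0 2 * (s + 2) := mul_nonneg hc0 (by omega)
        omega
      have B02 : A 0 2 ≤ 3 := by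
        by_contra h; push_neg at h
        have h1 : (4:ℤ) * (s + 2) ≤ A 0 2 * (s + 2) := mul_le_mul_of_nonneg_right (by omega) (by omega)
        have h2 : (0:ℤ) ≤ A 0 1 * s := mul_nonneg hb0 (by omega)
        omega
      have B12 : A 1 2 ≤ 3 := by
        by_contra h; push_neg at h
        have h1 : (4:ℤ) * (s + 2) ≤ A 1 2 * (s + 2) := mul_le_mul_of_nonneg_right (by omega) (by omega)
        omega
      have B21 : A 2 1 ≤ 3 := by
        by_contra h; push_neg at h
        have h1 : (4:ℤ) * s ≤ A 2 1 * s := mul_le_mul_of_nonneg_right (by omega) (by omega)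
        omega
      have r0 : A 0 1 = 1 ∧ A 0 2 = 0 := by
        interval_cases h01 : A 0 1 <;> interval_cases h02 : A 0 2 <;> omega
      have r1 : A 1 0 = ((s:ℤ) - 5) / 3 ∧ A 1 2 = 1 := by
        interval_cases h12 : A 1 2 <;> omega
      have r2 : A 2 0 = (2 * (s:ℤ) - 1) / 3 ∧ A 2 1 = 0 := by
        interval_cases h21 : A 2 1 <;> omega
      ext i j
      fin_cases i <;> fin_cases j <;>
        simp [hd 0, hd 1, hd 2, r0.1, r0.2, r1.1, r1.2, r2.1, r2.2]
    · rintro rfl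
      refine ⟨?_, ?_, ?_⟩
      · intro i; fin_cases i <;> simp
      · intro i j hij
        fin_cases i <;> fin_cases j <;>
          first
            | exact absurd rfl hij
            | (simp <;> omega)
      · intro i
        fin_cases i <;> simp [Fin.sum_univ_three] <;> omega
  · -- RF matrix of s - 1
    intro A
    constructor
    · rintro ⟨hd, ho, hr⟩
      have e0 := hr 0
      have e1 := hr 1
      have e2 := hr 2
      simp [Fin.sum_univ_three] at e0 e1 e2
      rw [hd 0] at e0
      rw [hd 1] at e1
      rw [hd 2] at e2
      have hb0 : 0 ≤ A 0 1 := ho 0 1 (by decide)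
      have hc0 : 0 ≤ A 0 2 := ho 0 2 (by decide)
      have ha1 : 0 ≤ A 1 0 := ho 1 0 (by decide)
      have hc1 : 0 ≤ A 1 2 := ho 1 2 (by decide)
      have ha2 : 0 ≤ A 2 0 := ho 2 0 (by decide)
      have hb2 : 0 ≤ A 2 1 := ho 2 1 (by decide)
      have B01 : A 0 1 ≤ 3 := by
        by_contra h; push_neg at h
        have h1 : (4:ℤ) * s ≤ A 0 1 * s := mul_le_mul_of_nonneg_right (by omega) (by omega)
        have h2 : (0:ℤ) ≤ A 0 2 * (s + 2) := mul_nonneg hc0 (by omega)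
        omega
      have B02 : A 0 2 ≤ 3 := by
        by_contra h; push_neg at h
        have h1 : (4:ℤ) * (s + 2) ≤ A 0 2 * (s + 2) := mul_le_mul_of_nonneg_right (by omega) (by omega)
        have h2 : (0:ℤ) ≤ A 0 1 * s := mul_nonneg hb0 (by omega)
        omega
      have B12 : A 1 2 ≤ 3 := by
        by_contra h; push_neg at h
        have h1 : (4:ℤ) * (s + 2) ≤ A 1 2 * (s + 2) := mul_le_mul_of_nonneg_right (by omega) (by omega)
        omega
      have B21 : A 2 1 ≤ 3 := by
        by_contra h; push_neg at h
        have h1 : (4:ℤ) * s ≤ A 2 1 * s := mul_le_mul_of_nonneg_right (by omega) (by omega)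
        omega
      have r0 : A 0 1 = 0 ∧ A 0 2 = 1 := by
        interval_cases h01 : A 0 1 <;> interval_cases h02 : A 0 2 <;> omega
      have r1 : A 1 0 = (2 * (s:ℤ) - 1) / 3 ∧ A 1 2 = 0 := by
        interval_cases h12 : A 1 2 <;> omega
      have r2 : A 2 0 = ((s:ℤ) + 1) / 3 ∧ A 2 1 = 1 := by
        interval_cases h21 : A 2 1 <;> omega
      ext i j
      fin_cases i <;> fin_cases j <;>
        simp [hd 0, hd 1, hd 2, r0.1, r0.2, r1.1, r1.2, r2.1, r2.2]
    · rintro rfl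
      refine ⟨?_, ?_, ?_⟩
      · intro i; fin_cases i <;> simp
      · intro i j hij
        fin_cases i <;> fin_cases j <;>
          first
            | exact absurd rfl hij
            | (simp <;> omega)
      · intro i
        fin_cases i <;> simp [Fin.sum_univ_three] <;> omega
end

section
/- Let S be an Arf numerical semigroup with multiplicity 4 and even conductor s, of the form S = ⟨4, 4k+2, s+1, s+3⟩ for some positive integer k with 4k+2 < s+1 (i.e., 1 ≤ k < s/4 if s ≡ 0 (mod 4), and 1 ≤ k ≤ (s−2)/4 if s ≡ 2 (mod 4)). Then PF(S) = {4k−2, s−3, s−1}, and the unique RF-matrix of the pseudo-Frobenius number 4k−2 is the 4×4 matrix with rows (−1, 1, 0, 0), (2k, −1, 0, 0), (k−1, 0, −1, 1), (k, 0, 1, −1). -/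
/-- Row analysis for the first row of the RF-matrix. -/
lemma arf_row1 (K Z b c d : ℤ) (hK : 1 ≤ K) (hZ : 4*K+2 ≤ Z)
    (hb : 0 ≤ b) (hc : 0 ≤ c) (hd : 0 ≤ d)
    (h : b*(4*K+2) + c*(Z+1) + d*(Z+3) = 4*K+2) : b = 1 ∧ c = 0 ∧ d = 0 := by
  have hc0 : c = 0 := le_antisymm (by nlinarith [mul_nonneg hb (show (0:ℤ) ≤ 4*K+2 by linarith), mul_nonneg hd (show (0:ℤ) ≤ Z+3 by linarith)]) hc
  have hd0 : d = 0 := le_antisymm (by nlinarith [mul_nonneg hb (show (0:ℤ) ≤ 4*K+2 by linarith), mul_nonneg hc (show (0:ℤ) ≤ Z+1 by linarith)]) hd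
  subst hc0 hd0
  have hb1 : b = 1 := by
    have h42 : (4*K+2) ≠ 0 := by positivity
    have : b * (4*K+2) = 1 * (4*K+2) := by linarith
    exact mul_right_cancel₀ h42 this
  exact ⟨hb1, rfl, rfl⟩

/-- Row analysis for the second row of the RF-matrix. -/
lemma arf_rowA (K T a c d : ℤ) (hK : 1 ≤ K) (hT : 2*K+1 ≤ T)
    (ha : 0 ≤ a) (hc : 0 ≤ c) (hd : 0 ≤ d)
    (h : 4*a + c*(2*T+1) + d*(2*T+3) = 8*K) : a = 2*K ∧ c = 0 ∧ d = 0 := by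
  have hc1 : c ≤ 1 := by nlinarith [mul_nonneg hd (show (0:ℤ) ≤ 2*T+3 by linarith)]
  have hd1 : d ≤ 1 := by nlinarith [mul_nonneg hc (show (0:ℤ) ≤ 2*T+1 by linarith)]
  interval_cases c <;> interval_cases d <;> omega

/-- Row analysis for the third row of the RF-matrix. -/
lemma arf_rowB (K T a b d : ℤ) (hK : 1 ≤ K) (hT : 2*K+1 ≤ T)
    (ha : 0 ≤ a) (hb : 0 ≤ b) (hd : 0 ≤ d)
    (h : 4*a + b*(4*K+2) + d*(2*T+3) = 2*T + 4*K - 1) : a = K - 1 ∧ b = 0 ∧ d = 1 := by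
  have hd2 : d ≤ 2 := by nlinarith [mul_nonneg hb (show (0:ℤ) ≤ 4*K+2 by linarith)]
  have hbe : b*(4*K+2) = 2*(b*(2*K+1)) := by ring
  interval_cases d
  · exfalso; rw [hbe] at h; omega
  · have hb0 : b = 0 := le_antisymm (by nlinarith) hb
    subst hb0; refine ⟨by linarith, rfl, rfl⟩
  · exfalso; nlinarith [mul_nonneg hb (show (0:ℤ) ≤ 4*K+2 by linarith)]

/-- Row analysis for the fourth row of the RF-matrix. -/
lemma arf_rowC (K T a b c : ℤ) (hK : 1 ≤ K) (hT : 2*K+1 ≤ T)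
    (ha : 0 ≤ a) (hb : 0 ≤ b) (hc : 0 ≤ c)
    (h : 4*a + b*(4*K+2) + c*(2*T+1) = 2*T + 4*K + 1) : a = K ∧ b = 0 ∧ c = 1 := by
  have hc2 : c ≤ 2 := by nlinarith [mul_nonneg hb (show (0:ℤ) ≤ 4*K+2 by linarith)]
  have hbe : b*(4*K+2) = 2*(b*(2*K+1)) := by ring
  interval_cases c
  · exfalso; rw [hbe] at h; omega
  · have hb0 : b = 0 := le_antisymm (by nlinarith) hb
    subst hb0; refine ⟨by linarith, rfl, rfl⟩
  · exfalso; nlinarith [mul_nonneg hb (show (0:ℤ) ≤ 4*K+2 by linarith)]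

/-- Arf numerical semigroup with multiplicity `4`, even conductor `s`,
of the form `S = ⟨4, 4k+2, s+1, s+3⟩` with `1 ≤ k` and `4k+2 < s+1`: then
`PF(S) = {4k-2, s-3, s-1}` and the unique RF-matrix of `4k-2` is as displayed. -/
theorem arf_mult_four_even (S : Set ℕ) (s k : ℕ)
    (hNS : IsNumericalSemigroup S) (hArf : IsArf S)
    (hmul : HasMultiplicity S 4) (hcon : HasConductor S s)
    (heven : Even s) (hk1 : 1 ≤ k) (hk2 : 4 * k + 2 < s + 1)
    (hS : S = (AddSubmonoid.closure ({4, 4 * k + 2, s + 1, s + 3} : Set ℕ) : Set ℕ)) :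
    pseudoFrobeniusSet S = {4 * k - 2, s - 3, s - 1} ∧
    (∀ A : Matrix (Fin 4) (Fin 4) ℤ,
      IsRFMatrix ![4, 4 * k + 2, s + 1, s + 3] (4 * (k : ℤ) - 2) A ↔
        A = !![-1, 1, 0, 0;
               2 * (k : ℤ), -1, 0, 0;
               (k : ℤ) - 1, 0, -1, 1;
               (k : ℤ), 0, 1, -1]) := by
  obtain ⟨t, hts⟩ := heven
  have hmem : ∀ n : ℕ, n ∈ S ↔ (n % 4 = 0 ∨ (n % 4 = 2 ∧ 4*k+2 ≤ n) ∨ s ≤ n) := by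
    intro n
    constructor
    · intro hn
      rw [hS] at hn
      let T : AddSubmonoid ℕ :=
        { carrier := {n | n % 4 = 0 ∨ (n % 4 = 2 ∧ 4*k+2 ≤ n) ∨ s ≤ n}
          zero_mem' := by simp
          add_mem' := by
            intro a b ha hb
            simp only [Set.mem_setOf_eq] at ha hb ⊢
            omega }
      have hle : AddSubmonoid.closure ({4, 4 * k + 2, s + 1, s + 3} : Set ℕ) ≤ T := by
        rw [AddSubmonoid.closure_le]
        intro x hx
        simp only [Set.mem_insert_iff, Set.mem_singleton_iff] at hx
        show x % 4 = 0 ∨ (x % 4 = 2 ∧ 4*k+2 ≤ x) ∨ s ≤ x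
        omega
      exact hle hn
    · intro hn
      rw [hS]
      have h4 : (4:ℕ) ∈ AddSubmonoid.closure ({4, 4 * k + 2, s + 1, s + 3} : Set ℕ) :=
        AddSubmonoid.subset_closure (by simp)
      have hk4 : (4*k+2:ℕ) ∈ AddSubmonoid.closure ({4, 4 * k + 2, s + 1, s + 3} : Set ℕ) :=
        AddSubmonoid.subset_closure (by simp)
      have hs1 : (s+1:ℕ) ∈ AddSubmonoid.closure ({4, 4 * k + 2, s + 1, s + 3} : Set ℕ) :=
        AddSubmonoid.subset_closure (by simp)
      have hs3 : (s+3:ℕ) ∈ AddSubmonoid.closure ({4, 4 * k + 2, s + 1, s + 3} : Set ℕ) :=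
        AddSubmonoid.subset_closure (by simp)
      have hmul4 : ∀ m : ℕ, m % 4 = 0 → m ∈ AddSubmonoid.closure ({4, 4 * k + 2, s + 1, s + 3} : Set ℕ) := by
        intro m hm
        have : m = (m/4) • 4 := by rw [smul_eq_mul]; omega
        rw [this]
        exact nsmul_mem h4 _
      rcases hn with h | ⟨h1, h2⟩ | h
      · exact hmul4 n h
      · have : n = (4*k+2) + (n - (4*k+2)) := by omega
        rw [this]
        exact AddSubmonoid.add_mem _ hk4 (hmul4 _ (by omega))
      · rcases Nat.even_or_odd n with he | ho
        · obtain ⟨u, hu⟩ := he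
          rcases Nat.even_or_odd u with ⟨v, hv⟩ | ⟨v, hv⟩
          · exact hmul4 n (by omega)
          · have : n = (4*k+2) + (n - (4*k+2)) := by omega
            rw [this]
            exact AddSubmonoid.add_mem _ hk4 (hmul4 _ (by omega))
        · obtain ⟨u, hu⟩ := ho
          by_cases h14 : (n - (s+1)) % 4 = 0
          · have : n = (s+1) + (n - (s+1)) := by omega
            rw [this]
            exact AddSubmonoid.add_mem _ hs1 (hmul4 _ h14)
          · have : n = (s+3) + (n - (s+3)) := by omega
            rw [this]
            exact AddSubmonoid.add_mem _ hs3 (hmul4 _ (by omega))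
  constructor
  · ext z
    simp only [pseudoFrobeniusSet, Set.mem_setOf_eq, Set.mem_insert_iff, Set.mem_singleton_iff]
    constructor
    · rintro ⟨h1, h2⟩
      rw [hmem] at h1
      have h4 := h2 4 ((hmem 4).2 (by omega)) (by omega)
      rw [hmem] at h4
      omega
    · rintro (rfl | rfl | rfl) <;>
        refine ⟨by rw [hmem]; omega, fun n hn hn0 => ?_⟩ <;>
        rw [hmem] at hn ⊢ <;> omega
  · have hK : (1:ℤ) ≤ (k:ℤ) := by exact_mod_cast hk1
    have hT : 2*(k:ℤ)+1 ≤ (t:ℤ) := by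
      have : 2*k+1 ≤ t := by omega
      exact_mod_cast this
    have hsZ : (s:ℤ) = 2*(t:ℤ) := by
      have : s = 2*t := by omega
      exact_mod_cast this
    intro A
    constructor
    · rintro ⟨hdiag, hoff, hrow⟩
      have e0 := hrow 0
      have e1 := hrow 1
      have e2 := hrow 2
      have e3 := hrow 3
      simp only [Fin.sum_univ_four, Matrix.cons_val_zero, Matrix.cons_val_one, Matrix.head_cons,
        Matrix.cons_val_two, Matrix.tail_cons, Matrix.cons_val_three] at e0 e1 e2 e3
      rw [hdiag 0] at e0
      rw [hdiag 1] at e1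
      rw [hdiag 2] at e2
      rw [hdiag 3] at e3
      push_cast [hsZ] at e0 e1 e2 e3
      have r0 := arf_row1 (k:ℤ) ((s:ℤ)) (A 0 1) (A 0 2) (A 0 3) hK (by rw [hsZ]; linarith)
        (hoff 0 1 (by decide)) (hoff 0 2 (by decide)) (hoff 0 3 (by decide))
        (by rw [hsZ]; linarith)
      have r1 := arf_rowA (k:ℤ) (t:ℤ) (A 1 0) (A 1 2) (A 1 3) hK hT
        (hoff 1 0 (by decide)) (hoff 1 2 (by decide)) (hoff 1 3 (by decide)) (by linarith)
      have r2 := arf_rowB (k:ℤ) (t:ℤ) (A 2 0) (A 2 1) (A 2 3) hK hT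
        (hoff 2 0 (by decide)) (hoff 2 1 (by decide)) (hoff 2 3 (by decide)) (by linarith)
      have r3 := arf_rowC (k:ℤ) (t:ℤ) (A 3 0) (A 3 1) (A 3 2) hK hT
        (hoff 3 0 (by decide)) (hoff 3 1 (by decide)) (hoff 3 2 (by decide)) (by linarith)
      obtain ⟨r01, r02, r03⟩ := r0
      obtain ⟨r10, r12, r13⟩ := r1
      obtain ⟨r20, r21, r23⟩ := r2
      obtain ⟨r30, r31, r32⟩ := r3
      have d0 := hdiag 0; have d1 := hdiag 1; have d2 := hdiag 2; have d3 := hdiag 3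
      ext i j
      fin_cases i <;> fin_cases j <;>
        simp only [Matrix.cons_val', Matrix.cons_val_zero, Matrix.cons_val_one, Matrix.head_cons,
          Matrix.empty_val', Matrix.cons_val_fin_one, Matrix.head_fin_const, Matrix.of_apply,
          Matrix.cons_val_two, Matrix.tail_cons, Matrix.cons_val_three] <;>
        assumption
    · rintro rfl
      refine ⟨?_, ?_, ?_⟩
      · intro i; fin_cases i <;> simp
      · intro i j hij
        clear hmem hS hNS hArf hmul hcon hT hsZ hk2 hts
        fin_cases i <;> fin_cases j <;> simp_all [Matrix.vecHead, Matrix.vecTail] <;> linarith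
      · intro i
        fin_cases i <;>
          simp [Fin.sum_univ_four] <;> push_cast <;> ring
end

section
/- Let S be an Arf numerical semigroup with multiplicity 4 and conductor s ≥ 4 with s ≡ 0 (mod 4), of the form S = ⟨4, s+1, s+2, s+3⟩. Then PF(S) = {s−3, s−2, s−1}; the unique RF-matrix of s−3 is the 4×4 matrix with rows (−1, 1, 0, 0), ((s−4)/4, −1, 1, 0), ((s−4)/4, 0, −1, 1), (s/2, 0, 0, −1); the unique RF-matrix of s−2 is the matrix with rows (−1, 0, 1, 0), ((s−4)/4, −1, 0, 1), (s/2, 0, −1, 0), (s/4, 1, 0, −1); and s−1 has exactly two RF-matrices, namely the matrices with rows (−1, 0, 0, 1), (s/2, −1, 0, 0), (s/4, 1, −1, 0) and fourth row either (s/4, 0, 1, −1) or (0, 2, 0, −1). -/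
lemma rf_bounds (k a b c d t : ℤ) (hk : 1 ≤ k) (ha : 0 ≤ a) (hb : 0 ≤ b)
    (hc : 0 ≤ c) (hd : 0 ≤ d)
    (heq : 4 * a + b * (4 * k + 1) + c * (4 * k + 2) + d * (4 * k + 3) = t)
    (ht : t ≤ 8 * k + 2) :
    b ≤ 2 ∧ c ≤ 2 ∧ d ≤ 2 := by
  have h1 : 0 ≤ b * (4 * k + 1) := mul_nonneg hb (by linarith)
  have h2 : 0 ≤ c * (4 * k + 2) := mul_nonneg hc (by linarith)
  have h3 : 0 ≤ d * (4 * k + 3) := mul_nonneg hd (by linarith)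
  refine ⟨?_, ?_, ?_⟩ <;> by_contra h <;> push_neg at h
  · linarith [mul_le_mul_of_nonneg_right (show (3:ℤ) ≤ b by linarith) (show (0:ℤ) ≤ 4*k+1 by linarith)]
  · linarith [mul_le_mul_of_nonneg_right (show (3:ℤ) ≤ c by linarith) (show (0:ℤ) ≤ 4*k+2 by linarith)]
  · linarith [mul_le_mul_of_nonneg_right (show (3:ℤ) ≤ d by linarith) (show (0:ℤ) ≤ 4*k+3 by linarith)]

lemma rf_row0 (k b c d t : ℤ) (hk : 1 ≤ k) (hb : 0 ≤ b) (hc : 0 ≤ c) (hd : 0 ≤ d)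
    (ht : t = 4*k+1 ∨ t = 4*k+2 ∨ t = 4*k+3)
    (heq : b * (4*k+1) + c * (4*k+2) + d * (4*k+3) = t) :
    (t = 4*k+1 → b = 1 ∧ c = 0 ∧ d = 0) ∧
    (t = 4*k+2 → b = 0 ∧ c = 1 ∧ d = 0) ∧
    (t = 4*k+3 → b = 0 ∧ c = 0 ∧ d = 1) := by
  obtain ⟨hb2, hc2, hd2⟩ := rf_bounds k 0 b c d t hk le_rfl hb hc hd (by linarith) (by omega)
  interval_cases b <;> interval_cases c <;> interval_cases d <;> omega

lemma rf_row1 (k a c d t : ℤ) (hk : 1 ≤ k) (ha : 0 ≤ a) (hc : 0 ≤ c) (hd : 0 ≤ d)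
    (ht : t = 8*k-2 ∨ t = 8*k-1 ∨ t = 8*k)
    (heq : 4*a + c * (4*k+2) + d * (4*k+3) = t) :
    (t = 8*k-2 → a = k-1 ∧ c = 1 ∧ d = 0) ∧
    (t = 8*k-1 → a = k-1 ∧ c = 0 ∧ d = 1) ∧
    (t = 8*k → a = 2*k ∧ c = 0 ∧ d = 0) := by
  obtain ⟨-, hc2, hd2⟩ := rf_bounds k a 0 c d t hk ha le_rfl hc hd (by linarith) (by omega)
  interval_cases c <;> interval_cases d <;> omega

lemma rf_row2 (k a b d t : ℤ) (hk : 1 ≤ k) (ha : 0 ≤ a) (hb : 0 ≤ b) (hd : 0 ≤ d)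
    (ht : t = 8*k-1 ∨ t = 8*k ∨ t = 8*k+1)
    (heq : 4*a + b * (4*k+1) + d * (4*k+3) = t) :
    (t = 8*k-1 → a = k-1 ∧ b = 0 ∧ d = 1) ∧
    (t = 8*k → a = 2*k ∧ b = 0 ∧ d = 0) ∧
    (t = 8*k+1 → a = k ∧ b = 1 ∧ d = 0) := by
  obtain ⟨hb2, -, hd2⟩ := rf_bounds k a b 0 d t hk ha hb le_rfl hd (by linarith) (by omega)
  interval_cases b <;> interval_cases d <;> omega

lemma rf_row3 (k a b c t : ℤ) (hk : 1 ≤ k) (ha : 0 ≤ a) (hb : 0 ≤ b) (hc : 0 ≤ c)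
    (ht : t = 8*k ∨ t = 8*k+1 ∨ t = 8*k+2)
    (heq : 4*a + b * (4*k+1) + c * (4*k+2) = t) :
    (t = 8*k → a = 2*k ∧ b = 0 ∧ c = 0) ∧
    (t = 8*k+1 → a = k ∧ b = 1 ∧ c = 0) ∧
    (t = 8*k+2 → (a = k ∧ b = 0 ∧ c = 1) ∨ (a = 0 ∧ b = 2 ∧ c = 0)) := by
  obtain ⟨hb2, hc2, -⟩ := rf_bounds k a b c 0 t hk ha hb hc le_rfl (by linarith) (by omega)
  interval_cases b <;> interval_cases c <;> omega

lemma eta_fin_four {α : Type*} (A : Matrix (Fin 4) (Fin 4) α) :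
    A = !![A 0 0, A 0 1, A 0 2, A 0 3;
           A 1 0, A 1 1, A 1 2, A 1 3;
           A 2 0, A 2 1, A 2 2, A 2 3;
           A 3 0, A 3 1, A 3 2, A 3 3] := by
  ext i j
  fin_cases i <;> fin_cases j <;> rfl

lemma bwdRF (s k : ℕ) (hk1 : (1:ℤ) ≤ (k:ℤ)) (hsz : (s:ℤ) = 4 * (k:ℤ))
    (f : ℤ) (A : Matrix (Fin 4) (Fin 4) ℤ)
    (hA : ∀ i, f = ∑ j, A i j * ((![4, s + 1, s + 2, s + 3] : Fin 4 → ℕ) j : ℤ))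
    (hd : ∀ i, A i i = -1) (hp : ∀ i j, i ≠ j → 0 ≤ A i j) :
    IsRFMatrix ![4, s + 1, s + 2, s + 3] f A :=
  ⟨hd, hp, hA⟩

lemma fwd3 (s k : ℕ) (hk1 : (1:ℤ) ≤ (k:ℤ)) (hsz : (s:ℤ) = 4 * (k:ℤ))
    (A : Matrix (Fin 4) (Fin 4) ℤ)
    (h : IsRFMatrix ![4, s + 1, s + 2, s + 3] ((s : ℤ) - 3) A) :
    A = !![-1, 1, 0, 0;
           ((s : ℤ) - 4) / 4, -1, 1, 0;
           ((s : ℤ) - 4) / 4, 0, -1, 1;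
           (s : ℤ) / 2, 0, 0, -1] := by
  obtain ⟨hdiag, hpos, hrow⟩ := h
  have e0 := hrow 0; have e1 := hrow 1; have e2 := hrow 2; have e3 := hrow 3
  simp only [Fin.sum_univ_four, Matrix.cons_val_zero, Matrix.cons_val_one,
    Matrix.head_cons, Matrix.cons_val_two, Matrix.tail_cons, Matrix.cons_val_three]
    at e0 e1 e2 e3
  push_cast at e0 e1 e2 e3
  rw [hsz, hdiag 0] at e0
  rw [hsz, hdiag 1] at e1
  rw [hsz, hdiag 2] at e2
  rw [hsz, hdiag 3] at e3
  obtain ⟨b0, c0, d0⟩ := (rf_row0 (k:ℤ) (A 0 1) (A 0 2) (A 0 3) (4*(k:ℤ)+1) hk1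
    (hpos 0 1 (by decide)) (hpos 0 2 (by decide)) (hpos 0 3 (by decide))
    (Or.inl rfl) (by linarith)).1 rfl
  obtain ⟨a1, c1, d1⟩ := (rf_row1 (k:ℤ) (A 1 0) (A 1 2) (A 1 3) (8*(k:ℤ)-2) hk1
    (hpos 1 0 (by decide)) (hpos 1 2 (by decide)) (hpos 1 3 (by decide))
    (Or.inl rfl) (by linarith)).1 rfl
  obtain ⟨a2, b2, d2⟩ := (rf_row2 (k:ℤ) (A 2 0) (A 2 1) (A 2 3) (8*(k:ℤ)-1) hk1
    (hpos 2 0 (by decide)) (hpos 2 1 (by decide)) (hpos 2 3 (by decide))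
    (Or.inl rfl) (by linarith)).1 rfl
  obtain ⟨a3, b3, c3⟩ := (rf_row3 (k:ℤ) (A 3 0) (A 3 1) (A 3 2) (8*(k:ℤ)) hk1
    (hpos 3 0 (by decide)) (hpos 3 1 (by decide)) (hpos 3 2 (by decide))
    (Or.inl rfl) (by linarith)).1 rfl
  have g10 : A 1 0 = ((s:ℤ) - 4) / 4 := by omega
  have g20 : A 2 0 = ((s:ℤ) - 4) / 4 := by omega
  have g30 : A 3 0 = (s:ℤ) / 2 := by omega
  rw [eta_fin_four A, hdiag 0, hdiag 1, hdiag 2, hdiag 3,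
    b0, c0, d0, g10, c1, d1, g20, b2, d2, g30, b3, c3]

lemma fwd2 (s k : ℕ) (hk1 : (1:ℤ) ≤ (k:ℤ)) (hsz : (s:ℤ) = 4 * (k:ℤ))
    (A : Matrix (Fin 4) (Fin 4) ℤ)
    (h : IsRFMatrix ![4, s + 1, s + 2, s + 3] ((s : ℤ) - 2) A) :
    A = !![-1, 0, 1, 0;
           ((s : ℤ) - 4) / 4, -1, 0, 1;
           (s : ℤ) / 2, 0, -1, 0;
           (s : ℤ) / 4, 1, 0, -1] := by
  obtain ⟨hdiag, hpos, hrow⟩ := h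
  have e0 := hrow 0; have e1 := hrow 1; have e2 := hrow 2; have e3 := hrow 3
  simp only [Fin.sum_univ_four, Matrix.cons_val_zero, Matrix.cons_val_one,
    Matrix.head_cons, Matrix.cons_val_two, Matrix.tail_cons, Matrix.cons_val_three]
    at e0 e1 e2 e3
  push_cast at e0 e1 e2 e3
  rw [hsz, hdiag 0] at e0
  rw [hsz, hdiag 1] at e1
  rw [hsz, hdiag 2] at e2
  rw [hsz, hdiag 3] at e3
  obtain ⟨b0, c0, d0⟩ := (rf_row0 (k:ℤ) (A 0 1) (A 0 2) (A 0 3) (4*(k:ℤ)+2) hk1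
    (hpos 0 1 (by decide)) (hpos 0 2 (by decide)) (hpos 0 3 (by decide))
    (Or.inr (Or.inl rfl)) (by linarith)).2.1 rfl
  obtain ⟨a1, c1, d1⟩ := (rf_row1 (k:ℤ) (A 1 0) (A 1 2) (A 1 3) (8*(k:ℤ)-1) hk1
    (hpos 1 0 (by decide)) (hpos 1 2 (by decide)) (hpos 1 3 (by decide))
    (Or.inr (Or.inl rfl)) (by linarith)).2.1 rfl
  obtain ⟨a2, b2, d2⟩ := (rf_row2 (k:ℤ) (A 2 0) (A 2 1) (A 2 3) (8*(k:ℤ)) hk1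
    (hpos 2 0 (by decide)) (hpos 2 1 (by decide)) (hpos 2 3 (by decide))
    (Or.inr (Or.inl rfl)) (by linarith)).2.1 rfl
  obtain ⟨a3, b3, c3⟩ := (rf_row3 (k:ℤ) (A 3 0) (A 3 1) (A 3 2) (8*(k:ℤ)+1) hk1
    (hpos 3 0 (by decide)) (hpos 3 1 (by decide)) (hpos 3 2 (by decide))
    (Or.inr (Or.inl rfl)) (by linarith)).2.1 rfl
  have g10 : A 1 0 = ((s:ℤ) - 4) / 4 := by omega
  have g20 : A 2 0 = (s:ℤ) / 2 := by omega
  have g30 : A 3 0 = (s:ℤ) / 4 := by omega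
  rw [eta_fin_four A, hdiag 0, hdiag 1, hdiag 2, hdiag 3,
    b0, c0, d0, g10, c1, d1, g20, b2, d2, g30, b3, c3]

lemma fwd1 (s k : ℕ) (hk1 : (1:ℤ) ≤ (k:ℤ)) (hsz : (s:ℤ) = 4 * (k:ℤ))
    (A : Matrix (Fin 4) (Fin 4) ℤ)
    (h : IsRFMatrix ![4, s + 1, s + 2, s + 3] ((s : ℤ) - 1) A) :
    A = !![-1, 0, 0, 1;
           (s : ℤ) / 2, -1, 0, 0;
           (s : ℤ) / 4, 1, -1, 0;
           (s : ℤ) / 4, 0, 1, -1] ∨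
    A = !![-1, 0, 0, 1;
           (s : ℤ) / 2, -1, 0, 0;
           (s : ℤ) / 4, 1, -1, 0;
           0, 2, 0, -1] := by
  obtain ⟨hdiag, hpos, hrow⟩ := h
  have e0 := hrow 0; have e1 := hrow 1; have e2 := hrow 2; have e3 := hrow 3
  simp only [Fin.sum_univ_four, Matrix.cons_val_zero, Matrix.cons_val_one,
    Matrix.head_cons, Matrix.cons_val_two, Matrix.tail_cons, Matrix.cons_val_three]
    at e0 e1 e2 e3
  push_cast at e0 e1 e2 e3
  rw [hsz, hdiag 0] at e0
  rw [hsz, hdiag 1] at e1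
  rw [hsz, hdiag 2] at e2
  rw [hsz, hdiag 3] at e3
  obtain ⟨b0, c0, d0⟩ := (rf_row0 (k:ℤ) (A 0 1) (A 0 2) (A 0 3) (4*(k:ℤ)+3) hk1
    (hpos 0 1 (by decide)) (hpos 0 2 (by decide)) (hpos 0 3 (by decide))
    (Or.inr (Or.inr rfl)) (by linarith)).2.2 rfl
  obtain ⟨a1, c1, d1⟩ := (rf_row1 (k:ℤ) (A 1 0) (A 1 2) (A 1 3) (8*(k:ℤ)) hk1
    (hpos 1 0 (by decide)) (hpos 1 2 (by decide)) (hpos 1 3 (by decide))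
    (Or.inr (Or.inr rfl)) (by linarith)).2.2 rfl
  obtain ⟨a2, b2, d2⟩ := (rf_row2 (k:ℤ) (A 2 0) (A 2 1) (A 2 3) (8*(k:ℤ)+1) hk1
    (hpos 2 0 (by decide)) (hpos 2 1 (by decide)) (hpos 2 3 (by decide))
    (Or.inr (Or.inr rfl)) (by linarith)).2.2 rfl
  have hrow3cases := (rf_row3 (k:ℤ) (A 3 0) (A 3 1) (A 3 2) (8*(k:ℤ)+2) hk1
    (hpos 3 0 (by decide)) (hpos 3 1 (by decide)) (hpos 3 2 (by decide))
    (Or.inr (Or.inr rfl)) (by linarith)).2.2 rfl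
  have g10 : A 1 0 = (s:ℤ) / 2 := by omega
  have g20 : A 2 0 = (s:ℤ) / 4 := by omega
  rcases hrow3cases with ⟨a3, b3, c3⟩ | ⟨a3, b3, c3⟩
  · left
    have g30 : A 3 0 = (s:ℤ) / 4 := by omega
    rw [eta_fin_four A, hdiag 0, hdiag 1, hdiag 2, hdiag 3,
      b0, c0, d0, g10, c1, d1, g20, b2, d2, g30, b3, c3]
  · right
    rw [eta_fin_four A, hdiag 0, hdiag 1, hdiag 2, hdiag 3,
      b0, c0, d0, g10, c1, d1, g20, b2, d2, a3, b3, c3]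

lemma bwd3 (s k : ℕ) (hk1 : (1:ℤ) ≤ (k:ℤ)) (hsz : (s:ℤ) = 4 * (k:ℤ)) :
    IsRFMatrix ![4, s + 1, s + 2, s + 3] ((s : ℤ) - 3)
      !![-1, 1, 0, 0;
         ((s : ℤ) - 4) / 4, -1, 1, 0;
         ((s : ℤ) - 4) / 4, 0, -1, 1;
         (s : ℤ) / 2, 0, 0, -1] := by
  refine ⟨?_, ?_, ?_⟩
  · intro i; fin_cases i <;> simp
  · intro i j hij; fin_cases i <;> fin_cases j <;>
      simp_all [Matrix.vecHead, Matrix.vecTail] <;> omega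
  · intro i; fin_cases i <;> simp [Fin.sum_univ_four] <;> omega

lemma bwd2 (s k : ℕ) (hk1 : (1:ℤ) ≤ (k:ℤ)) (hsz : (s:ℤ) = 4 * (k:ℤ)) :
    IsRFMatrix ![4, s + 1, s + 2, s + 3] ((s : ℤ) - 2)
      !![-1, 0, 1, 0;
         ((s : ℤ) - 4) / 4, -1, 0, 1;
         (s : ℤ) / 2, 0, -1, 0;
         (s : ℤ) / 4, 1, 0, -1] := by
  refine ⟨?_, ?_, ?_⟩
  · intro i; fin_cases i <;> simp
  · intro i j hij; fin_cases i <;> fin_cases j <;>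
      simp_all [Matrix.vecHead, Matrix.vecTail] <;> omega
  · intro i; fin_cases i <;> simp [Fin.sum_univ_four] <;> omega

lemma bwd1a (s k : ℕ) (hk1 : (1:ℤ) ≤ (k:ℤ)) (hsz : (s:ℤ) = 4 * (k:ℤ)) :
    IsRFMatrix ![4, s + 1, s + 2, s + 3] ((s : ℤ) - 1)
      !![-1, 0, 0, 1;
         (s : ℤ) / 2, -1, 0, 0;
         (s : ℤ) / 4, 1, -1, 0;
         (s : ℤ) / 4, 0, 1, -1] := by
  refine ⟨?_, ?_, ?_⟩
  · intro i; fin_cases i <;> simp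
  · intro i j hij; fin_cases i <;> fin_cases j <;>
      simp_all [Matrix.vecHead, Matrix.vecTail] <;> omega
  · intro i; fin_cases i <;> simp [Fin.sum_univ_four] <;> omega

lemma bwd1b (s k : ℕ) (hk1 : (1:ℤ) ≤ (k:ℤ)) (hsz : (s:ℤ) = 4 * (k:ℤ)) :
    IsRFMatrix ![4, s + 1, s + 2, s + 3] ((s : ℤ) - 1)
      !![-1, 0, 0, 1;
         (s : ℤ) / 2, -1, 0, 0;
         (s : ℤ) / 4, 1, -1, 0;
         0, 2, 0, -1] := by
  refine ⟨?_, ?_, ?_⟩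
  · intro i; fin_cases i <;> simp
  · intro i j hij; fin_cases i <;> fin_cases j <;>
      simp_all [Matrix.vecHead, Matrix.vecTail] <;> omega
  · intro i; fin_cases i <;> simp [Fin.sum_univ_four] <;> omega

/-- Arf numerical semigroup with multiplicity `4`, conductor `s ≥ 4`,
`s ≡ 0 (mod 4)`, of the form `S = ⟨4, s+1, s+2, s+3⟩`: then `PF(S) = {s-3, s-2, s-1}`,
the RF-matrices of `s-3` and `s-2` are unique as displayed, and `s-1` has exactly the
two displayed RF-matrices. -/
theorem arf_mult_four_mod_zero (S : Set ℕ) (s : ℕ)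
    (hNS : IsNumericalSemigroup S) (hArf : IsArf S)
    (hmul : HasMultiplicity S 4) (hcon : HasConductor S s)
    (hs : 4 ≤ s) (hmod : s % 4 = 0)
    (hS : S = (AddSubmonoid.closure ({4, s + 1, s + 2, s + 3} : Set ℕ) : Set ℕ)) :
    pseudoFrobeniusSet S = {s - 3, s - 2, s - 1} ∧
    (∀ A : Matrix (Fin 4) (Fin 4) ℤ,
      IsRFMatrix ![4, s + 1, s + 2, s + 3] ((s : ℤ) - 3) A ↔
        A = !![-1, 1, 0, 0;
               ((s : ℤ) - 4) / 4, -1, 1, 0;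
               ((s : ℤ) - 4) / 4, 0, -1, 1;
               (s : ℤ) / 2, 0, 0, -1]) ∧
    (∀ A : Matrix (Fin 4) (Fin 4) ℤ,
      IsRFMatrix ![4, s + 1, s + 2, s + 3] ((s : ℤ) - 2) A ↔
        A = !![-1, 0, 1, 0;
               ((s : ℤ) - 4) / 4, -1, 0, 1;
               (s : ℤ) / 2, 0, -1, 0;
               (s : ℤ) / 4, 1, 0, -1]) ∧
    (∀ A : Matrix (Fin 4) (Fin 4) ℤ,
      IsRFMatrix ![4, s + 1, s + 2, s + 3] ((s : ℤ) - 1) A ↔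
        (A = !![-1, 0, 0, 1;
                (s : ℤ) / 2, -1, 0, 0;
                (s : ℤ) / 4, 1, -1, 0;
                (s : ℤ) / 4, 0, 1, -1] ∨
         A = !![-1, 0, 0, 1;
                (s : ℤ) / 2, -1, 0, 0;
                (s : ℤ) / 4, 1, -1, 0;
                0, 2, 0, -1]))  := by
  obtain ⟨k, hk⟩ : ∃ k, s = 4 * k := ⟨s / 4, by omega⟩
  have hk1 : (1:ℤ) ≤ (k:ℤ) := by exact_mod_cast (by omega : 1 ≤ k)
  have hsz : (s:ℤ) = 4 * (k:ℤ) := by exact_mod_cast hk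
  have hmem : ∀ n, n ∈ S ↔ (n % 4 = 0 ∨ s ≤ n) := by
    intro n
    constructor
    · intro hn
      rw [hS] at hn
      induction hn using AddSubmonoid.closure_induction with
      | mem x hx =>
        simp only [Set.mem_insert_iff, Set.mem_singleton_iff] at hx
        omega
      | zero => left; rfl
      | add x y _ _ hx hy => omega
    · rintro (h | h)
      · rw [hS]
        have h4 : (4:ℕ) ∈ AddSubmonoid.closure ({4, s + 1, s + 2, s + 3} : Set ℕ) :=
          AddSubmonoid.subset_closure (by simp)
        have h5 := nsmul_mem h4 (n / 4)
        simpa [smul_eq_mul, Nat.div_mul_cancel (show 4 ∣ n by omega)] using h5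
      · exact hcon.1 n h
  refine ⟨?_, ?_, ?_, ?_⟩
  · ext z
    simp only [pseudoFrobeniusSet, Set.mem_setOf_eq, Set.mem_insert_iff,
      Set.mem_singleton_iff]
    constructor
    · rintro ⟨hz1, hz2⟩
      rw [hmem] at hz1
      have h4 : (4:ℕ) ∈ S := (hmem 4).2 (by omega)
      have := hz2 4 h4 (by omega)
      rw [hmem] at this
      omega
    · intro hz
      refine ⟨by rw [hmem]; omega, ?_⟩
      intro n hn hn0
      rw [hmem] at hn
      rw [hmem]
      omega
  · intro A
    exact ⟨fwd3 s k hk1 hsz A, fun h => h ▸ bwd3 s k hk1 hsz⟩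
  · intro A
    exact ⟨fwd2 s k hk1 hsz A, fun h => h ▸ bwd2 s k hk1 hsz⟩
  · intro A
    constructor
    · exact fwd1 s k hk1 hsz A
    · rintro (rfl | rfl)
      · exact bwd1a s k hk1 hsz
      · exact bwd1b s k hk1 hsz
end

section
/- Let S be an Arf numerical semigroup with multiplicity 4 and conductor s > 4 with s ≡ 3 (mod 4). Then S = ⟨4, s, s+2, s+3⟩, PF(S) = {s−4, s−2, s−1}, and the unique RF-matrix of the pseudo-Frobenius number s−4 is the 4×4 matrix with rows (−1, 1, 0, 0), ((s−7)/4, −1, 0, 1), ((s−1)/2, 0, −1, 0), ((s−3)/4, 0, 1, −1). -/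
lemma keyAux (s b c d : ℤ) (hs : 7 ≤ s) (hb : 0 ≤ b) (hc : 0 ≤ c) (hd : 0 ≤ d)
    (h : b*s + c*(s+2) + d*(s+3) ≤ 2*s - 1) : b + c + d ≤ 1 := by
  by_contra hcon
  push_neg at hcon
  nlinarith [mul_nonneg (by linarith : (0:ℤ) ≤ b + c + d - 2) (by linarith : (0:ℤ) ≤ s)]

lemma row0 (s b c d : ℤ) (hs : 7 ≤ s) (hmod : s % 4 = 3) (hb : 0 ≤ b) (hc : 0 ≤ c) (hd : 0 ≤ d)
    (h : s - 4 = (-1)*4 + b*s + c*(s+2) + d*(s+3)) : b = 1 ∧ c = 0 ∧ d = 0 := by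
  have hk := keyAux s b c d hs hb hc hd (by linarith)
  have hb1 : b ≤ 1 := by linarith
  have hc1 : c ≤ 1 := by linarith
  have hd1 : d ≤ 1 := by linarith
  interval_cases b <;> interval_cases c <;> interval_cases d <;> omega

lemma row1 (s a c d : ℤ) (hs : 7 ≤ s) (hmod : s % 4 = 3) (ha : 0 ≤ a) (hc : 0 ≤ c) (hd : 0 ≤ d)
    (h : s - 4 = a*4 + (-1)*s + c*(s+2) + d*(s+3)) : a = (s-7)/4 ∧ c = 0 ∧ d = 1 := by
  have hk := keyAux s 0 c d hs le_rfl hc hd (by linarith)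
  have hc1 : c ≤ 1 := by linarith
  have hd1 : d ≤ 1 := by linarith
  interval_cases c <;> interval_cases d <;> omega

lemma row2 (s a b d : ℤ) (hs : 7 ≤ s) (hmod : s % 4 = 3) (ha : 0 ≤ a) (hb : 0 ≤ b) (hd : 0 ≤ d)
    (h : s - 4 = a*4 + b*s + (-1)*(s+2) + d*(s+3)) : a = (s-1)/2 ∧ b = 0 ∧ d = 0 := by
  have hk := keyAux s b 0 d hs hb le_rfl hd (by linarith)
  have hb1 : b ≤ 1 := by linarith
  have hd1 : d ≤ 1 := by linarith
  interval_cases b <;> interval_cases d <;> omega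

lemma row3 (s a b c : ℤ) (hs : 7 ≤ s) (hmod : s % 4 = 3) (ha : 0 ≤ a) (hb : 0 ≤ b) (hc : 0 ≤ c)
    (h : s - 4 = a*4 + b*s + c*(s+2) + (-1)*(s+3)) : a = (s-3)/4 ∧ b = 0 ∧ c = 1 := by
  have hk := keyAux s b c 0 hs hb hc le_rfl (by linarith)
  have hb1 : b ≤ 1 := by linarith
  have hc1 : c ≤ 1 := by linarith
  interval_cases b <;> interval_cases c <;> omega

/-- Arf numerical semigroup with multiplicity `4`, conductor `s > 4`,
`s ≡ 3 (mod 4)`: `S = ⟨4, s, s+2, s+3⟩`, `PF(S) = {s-4, s-2, s-1}`, and the unique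
RF-matrix of `s-4` is as displayed. -/
theorem arf_mult_four_mod_three (S : Set ℕ) (s : ℕ)
    (hNS : IsNumericalSemigroup S) (hArf : IsArf S)
    (hmul : HasMultiplicity S 4) (hcon : HasConductor S s)
    (hs : 4 < s) (hmod : s % 4 = 3) :
    S = (AddSubmonoid.closure ({4, s, s + 2, s + 3} : Set ℕ) : Set ℕ) ∧
    pseudoFrobeniusSet S = {s - 4, s - 2, s - 1} ∧
    (∀ A : Matrix (Fin 4) (Fin 4) ℤ,
      IsRFMatrix ![4, s, s + 2, s + 3] ((s : ℤ) - 4) A ↔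
        A = !![-1, 1, 0, 0;
               ((s : ℤ) - 7) / 4, -1, 0, 1;
               ((s : ℤ) - 1) / 2, 0, -1, 0;
               ((s : ℤ) - 3) / 4, 0, 1, -1]) := by
  obtain ⟨h0S, haddS, -⟩ := hNS
  obtain ⟨h4S, -, hminS⟩ := hmul
  obtain ⟨hconS, hconMin⟩ := hcon
  have hs7 : 7 ≤ s := by omega
  have hmulS : ∀ k : ℕ, 4 * k ∈ S := by
    intro k
    induction k with
    | zero => simpa using h0S
    | succ k ih =>
        have := haddS _ ih _ h4S
        rwa [show 4 * k + 4 = 4 * (k+1) by ring] at this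
  have hs1 : s - 1 ∉ S := by
    intro h
    have : s ≤ s - 1 := by
      apply hconMin
      intro n hn
      rcases eq_or_lt_of_le hn with h' | h'
      · rwa [← h']
      · exact hconS n (by omega)
    omega
  have h2class : ∀ m ∈ S, m % 4 = 2 → m < s → False := by
    intro m hm hm2 hms
    have hk : s - 1 = m + 4 * ((s - 1 - m)/4) := by omega
    exact hs1 (hk ▸ haddS m hm _ (hmulS _))
  have hchar : ∀ n, n ∈ S ↔ (n % 4 = 0 ∨ s ≤ n) := by
    intro n
    constructor
    · intro hn
      by_contra hcon'
      push_neg at hcon'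
      obtain ⟨hn4, hns⟩ := hcon'
      rcases (show n % 4 = 1 ∨ n % 4 = 2 ∨ n % 4 = 3 by omega) with h1 | h2 | h3
      · have hn1 : n - 1 ∈ S := by
          have := hmulS ((n-1)/4)
          rwa [show 4 * ((n-1)/4) = n - 1 by omega] at this
        have harf := hArf (n-1) hn1 n hn (by omega)
        rw [show 2 * n - (n-1) = n + 1 by omega] at harf
        exact h2class (n+1) harf (by omega) (by omega)
      · exact h2class n hn h2 (by omega)
      · have hs4 : s - 4 ∈ S := by
          have hk : s - 4 = n + 4 * ((s - 4 - n)/4) := by omega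
          exact hk ▸ haddS n hn _ (hmulS _)
        have hs7' : s - 7 ∈ S := by
          have := hmulS ((s-7)/4)
          rwa [show 4 * ((s-7)/4) = s - 7 by omega] at this
        have harf := hArf (s-7) hs7' (s-4) hs4 (by omega)
        rw [show 2 * (s-4) - (s-7) = s - 1 by omega] at harf
        exact hs1 harf
    · rintro (h | h)
      · have := hmulS (n / 4)
        rwa [show 4 * (n/4) = n by omega] at this
      · exact hconS n h
  refine ⟨?_, ?_, ?_⟩
  · -- S = closure
    ext n
    constructor
    · intro hn
      have h4C : (4:ℕ) ∈ AddSubmonoid.closure ({4, s, s + 2, s + 3} : Set ℕ) :=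
        AddSubmonoid.subset_closure (by simp)
      have hsC : s ∈ AddSubmonoid.closure ({4, s, s + 2, s + 3} : Set ℕ) :=
        AddSubmonoid.subset_closure (by simp)
      have hs2C : s + 2 ∈ AddSubmonoid.closure ({4, s, s + 2, s + 3} : Set ℕ) :=
        AddSubmonoid.subset_closure (by simp)
      have hs3C : s + 3 ∈ AddSubmonoid.closure ({4, s, s + 2, s + 3} : Set ℕ) :=
        AddSubmonoid.subset_closure (by simp)
      have hC4 : ∀ k : ℕ, (4 * k : ℕ) ∈ AddSubmonoid.closure ({4, s, s + 2, s + 3} : Set ℕ) := by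
        intro k
        induction k with
        | zero => simpa using (AddSubmonoid.closure ({4, s, s + 2, s + 3} : Set ℕ)).zero_mem
        | succ k ih =>
            have := (AddSubmonoid.closure ({4, s, s + 2, s + 3} : Set ℕ)).add_mem ih h4C
            rwa [show 4 * k + 4 = 4 * (k+1) by ring] at this
      rw [hchar] at hn
      rcases hn with h | h
      · have := hC4 (n / 4)
        rwa [show 4 * (n/4) = n by omega] at this
      · rcases (show n % 4 = 0 ∨ n % 4 = 1 ∨ n % 4 = 2 ∨ n % 4 = 3 by omega) with h0 | h1 | h2 | h3
        · have := hC4 (n / 4)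
          rwa [show 4 * (n/4) = n by omega] at this
        · have := (AddSubmonoid.closure ({4, s, s + 2, s + 3} : Set ℕ)).add_mem hs2C (hC4 ((n - (s+2))/4))
          rwa [show s + 2 + 4 * ((n - (s+2))/4) = n by omega] at this
        · have := (AddSubmonoid.closure ({4, s, s + 2, s + 3} : Set ℕ)).add_mem hs3C (hC4 ((n - (s+3))/4))
          rwa [show s + 3 + 4 * ((n - (s+3))/4) = n by omega] at this
        · have := (AddSubmonoid.closure ({4, s, s + 2, s + 3} : Set ℕ)).add_mem hsC (hC4 ((n - s)/4))
          rwa [show s + 4 * ((n - s)/4) = n by omega] at this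
    · intro hn
      refine AddSubmonoid.closure_induction ?_ h0S (fun x y _ _ hx hy => haddS x hx y hy) hn
      intro x hx
      rcases hx with rfl | rfl | rfl | rfl
      · exact h4S
      · exact hconS _ le_rfl
      · exact hconS _ (by omega)
      · exact hconS _ (by omega)
  · -- PF set
    ext z
    simp only [pseudoFrobeniusSet, Set.mem_setOf_eq, Set.mem_insert_iff, Set.mem_singleton_iff]
    constructor
    · rintro ⟨hzS, hz⟩
      rw [hchar] at hzS
      push_neg at hzS
      have h4 := hz 4 h4S (by norm_num)
      rw [hchar] at h4
      omega
    · intro hz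
      have hzb : s - 4 ≤ z ∧ z < s ∧ z % 4 ≠ 0 := by omega
      constructor
      · rw [hchar]; omega
      · intro n hn hne
        have h4n : 4 ≤ n := hminS n hn hne
        rw [hchar]
        omega
  · -- RF matrix
    intro A
    constructor
    · rintro ⟨hdiag, hoff, hrow⟩
      have e0 := hrow 0
      have e1 := hrow 1
      have e2 := hrow 2
      have e3 := hrow 3
      simp only [Fin.sum_univ_four, Matrix.cons_val_zero, Matrix.cons_val_one, Matrix.head_cons,
        Matrix.cons_val_two, Matrix.tail_cons, Matrix.cons_val_three] at e0 e1 e2 e3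
      push_cast at e0 e1 e2 e3
      have d0 := hdiag 0
      have d1 := hdiag 1
      have d2 := hdiag 2
      have d3 := hdiag 3
      obtain ⟨hb0, hc0, hd0⟩ := row0 s (A 0 1) (A 0 2) (A 0 3) (by omega) (by omega)
        (hoff 0 1 (by decide)) (hoff 0 2 (by decide)) (hoff 0 3 (by decide))
        (by rw [d0] at e0; linarith)
      obtain ⟨ha1, hc1, hd1⟩ := row1 s (A 1 0) (A 1 2) (A 1 3) (by omega) (by omega)
        (hoff 1 0 (by decide)) (hoff 1 2 (by decide)) (hoff 1 3 (by decide))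
        (by rw [d1] at e1; linarith)
      obtain ⟨ha2, hb2, hd2⟩ := row2 s (A 2 0) (A 2 1) (A 2 3) (by omega) (by omega)
        (hoff 2 0 (by decide)) (hoff 2 1 (by decide)) (hoff 2 3 (by decide))
        (by rw [d2] at e2; linarith)
      obtain ⟨ha3, hb3, hc3⟩ := row3 s (A 3 0) (A 3 1) (A 3 2) (by omega) (by omega)
        (hoff 3 0 (by decide)) (hoff 3 1 (by decide)) (hoff 3 2 (by decide))
        (by rw [d3] at e3; linarith)
      ext i j
      fin_cases i <;> fin_cases j <;>
        simp only [Matrix.cons_val', Matrix.cons_val_zero, Matrix.cons_val_one, Matrix.head_cons,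
          Matrix.cons_val_two, Matrix.tail_cons, Matrix.cons_val_three, Matrix.empty_val',
          Matrix.cons_val_fin_one, Matrix.head_fin_const, Matrix.of_apply] <;>
        first
          | exact d0 | exact d1 | exact d2 | exact d3
          | exact hb0 | exact hc0 | exact hd0
          | exact ha1 | exact hc1 | exact hd1
          | exact ha2 | exact hb2 | exact hd2
          | exact ha3 | exact hb3 | exact hc3
    · rintro rfl
      refine ⟨?_, ?_, ?_⟩
      · intro i
        fin_cases i <;> simp
      · intro i j hij
        fin_cases i <;> fin_cases j <;>
          first
            | exact absurd rfl hij
            | (simp [Matrix.vecHead, Matrix.vecTail]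
               try omega)
      · intro i
        fin_cases i <;>
          (simp [Fin.sum_univ_four, Matrix.vecHead, Matrix.vecTail]
           omega)
end

section
/- Let S be an Arf numerical semigroup with multiplicity 5 and conductor s > 5 with s ≡ 0 (mod 5), of the form S = ⟨5, s−2, s+1, s+2, s+4⟩. Then PF(S) = {s−7, s−4, s−3, s−1}, and the unique RF-matrix of the pseudo-Frobenius number s−7 is the 5×5 matrix with rows (−1, 1, 0, 0, 0), ((s−10)/5, −1, 1, 0, 0), ((s−10)/5, 0, −1, 0, 1), ((2s−5)/5, 0, 0, −1, 0), ((s−5)/5, 0, 0, 1, −1). -/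
lemma rf_bound (s x b c d e : ℤ) (hs : 10 ≤ s) (hx : 0 ≤ x) (hb : 0 ≤ b) (hc : 0 ≤ c)
    (hd : 0 ≤ d) (he : 0 ≤ e)
    (h : x + b*(s-2) + c*(s+1) + d*(s+2) + e*(s+4) ≤ 2*s-3) : b+c+d+e ≤ 2 := by
  by_contra hcon
  push_neg at hcon
  nlinarith [mul_nonneg (by linarith : (0:ℤ) ≤ b+c+d+e-3) (by linarith : (0:ℤ) ≤ s-2)]

lemma rf_row0_s6 (s b c d e : ℤ) (hs5 : s % 5 = 0) (hs10 : 10 ≤ s)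
    (hb : 0 ≤ b) (hc : 0 ≤ c) (hd : 0 ≤ d) (he : 0 ≤ e)
    (heq : s - 7 = (-1)*5 + b*(s-2) + c*(s+1) + d*(s+2) + e*(s+4)) :
    b = 1 ∧ c = 0 ∧ d = 0 ∧ e = 0 := by
  have hbd : b + c + d + e ≤ 2 :=
    rf_bound s 0 b c d e hs10 le_rfl hb hc hd he (by linarith)
  have h1 : b = 0 ∨ b = 1 ∨ b = 2 := by omega
  have h2 : c = 0 ∨ c = 1 ∨ c = 2 := by omega
  have h3 : d = 0 ∨ d = 1 ∨ d = 2 := by omega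
  have h4 : e = 0 ∨ e = 1 ∨ e = 2 := by omega
  rcases h1 with h1|h1|h1 <;> rcases h2 with h2|h2|h2 <;> rcases h3 with h3|h3|h3 <;>
    rcases h4 with h4|h4|h4 <;> rw [h1, h2, h3, h4] at heq <;> omega

lemma rf_row1_s6 (s a c d e : ℤ) (hs5 : s % 5 = 0) (hs10 : 10 ≤ s)
    (ha : 0 ≤ a) (hc : 0 ≤ c) (hd : 0 ≤ d) (he : 0 ≤ e)
    (heq : s - 7 = a*5 + (-1)*(s-2) + c*(s+1) + d*(s+2) + e*(s+4)) :
    a = (s-10)/5 ∧ c = 1 ∧ d = 0 ∧ e = 0 := by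
  have hbd : (0:ℤ) + c + d + e ≤ 2 :=
    rf_bound s (a*5) 0 c d e hs10 (by linarith) le_rfl hc hd he (by linarith)
  have h2 : c = 0 ∨ c = 1 ∨ c = 2 := by omega
  have h3 : d = 0 ∨ d = 1 ∨ d = 2 := by omega
  have h4 : e = 0 ∨ e = 1 ∨ e = 2 := by omega
  rcases h2 with h2|h2|h2 <;> rcases h3 with h3|h3|h3 <;>
    rcases h4 with h4|h4|h4 <;> rw [h2, h3, h4] at heq <;> omega

lemma rf_row2_s6 (s a b d e : ℤ) (hs5 : s % 5 = 0) (hs10 : 10 ≤ s)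
    (ha : 0 ≤ a) (hb : 0 ≤ b) (hd : 0 ≤ d) (he : 0 ≤ e)
    (heq : s - 7 = a*5 + b*(s-2) + (-1)*(s+1) + d*(s+2) + e*(s+4)) :
    a = (s-10)/5 ∧ b = 0 ∧ d = 0 ∧ e = 1 := by
  have hbd : b + (0:ℤ) + d + e ≤ 2 :=
    rf_bound s (a*5) b 0 d e hs10 (by linarith) hb le_rfl hd he (by linarith)
  have h2 : b = 0 ∨ b = 1 ∨ b = 2 := by omega
  have h3 : d = 0 ∨ d = 1 ∨ d = 2 := by omega
  have h4 : e = 0 ∨ e = 1 ∨ e = 2 := by omega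
  rcases h2 with h2|h2|h2 <;> rcases h3 with h3|h3|h3 <;>
    rcases h4 with h4|h4|h4 <;> rw [h2, h3, h4] at heq <;> omega

lemma rf_row3_s6 (s a b c e : ℤ) (hs5 : s % 5 = 0) (hs10 : 10 ≤ s)
    (ha : 0 ≤ a) (hb : 0 ≤ b) (hc : 0 ≤ c) (he : 0 ≤ e)
    (heq : s - 7 = a*5 + b*(s-2) + c*(s+1) + (-1)*(s+2) + e*(s+4)) :
    a = (2*s-5)/5 ∧ b = 0 ∧ c = 0 ∧ e = 0 := by
  have hbd : b + c + (0:ℤ) + e ≤ 2 :=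
    rf_bound s (a*5) b c 0 e hs10 (by linarith) hb hc le_rfl he (by linarith)
  have h2 : b = 0 ∨ b = 1 ∨ b = 2 := by omega
  have h3 : c = 0 ∨ c = 1 ∨ c = 2 := by omega
  have h4 : e = 0 ∨ e = 1 ∨ e = 2 := by omega
  rcases h2 with h2|h2|h2 <;> rcases h3 with h3|h3|h3 <;>
    rcases h4 with h4|h4|h4 <;> rw [h2, h3, h4] at heq <;> omega

lemma rf_row4 (s a b c d : ℤ) (hs5 : s % 5 = 0) (hs10 : 10 ≤ s)
    (ha : 0 ≤ a) (hb : 0 ≤ b) (hc : 0 ≤ c) (hd : 0 ≤ d)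
    (heq : s - 7 = a*5 + b*(s-2) + c*(s+1) + d*(s+2) + (-1)*(s+4)) :
    a = (s-5)/5 ∧ b = 0 ∧ c = 0 ∧ d = 1 := by
  have hbd : b + c + d + (0:ℤ) ≤ 2 :=
    rf_bound s (a*5) b c d 0 hs10 (by linarith) hb hc hd le_rfl (by linarith)
  have h2 : b = 0 ∨ b = 1 ∨ b = 2 := by omega
  have h3 : c = 0 ∨ c = 1 ∨ c = 2 := by omega
  have h4 : d = 0 ∨ d = 1 ∨ d = 2 := by omega
  rcases h2 with h2|h2|h2 <;> rcases h3 with h3|h3|h3 <;>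
    rcases h4 with h4|h4|h4 <;> rw [h2, h3, h4] at heq <;> omega

/-- Arf numerical semigroup with multiplicity `5`, conductor `s > 5`,
`s ≡ 0 (mod 5)`, of the form `S = ⟨5, s-2, s+1, s+2, s+4⟩`: then
`PF(S) = {s-7, s-4, s-3, s-1}` and the unique RF-matrix of `s-7` is as displayed. -/
theorem arf_mult_five_mod_zero_first (S : Set ℕ) (s : ℕ)
    (hNS : IsNumericalSemigroup S) (hArf : IsArf S)
    (hmul : HasMultiplicity S 5) (hcon : HasConductor S s)
    (hs : 5 < s) (hmod : s % 5 = 0)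
    (hS : S = (AddSubmonoid.closure ({5, s - 2, s + 1, s + 2, s + 4} : Set ℕ) : Set ℕ)) :
    pseudoFrobeniusSet S = {s - 7, s - 4, s - 3, s - 1} ∧
    (∀ A : Matrix (Fin 5) (Fin 5) ℤ,
      IsRFMatrix ![5, s - 2, s + 1, s + 2, s + 4] ((s : ℤ) - 7) A ↔
        A = !![-1, 1, 0, 0, 0;
               ((s : ℤ) - 10) / 5, -1, 1, 0, 0;
               ((s : ℤ) - 10) / 5, 0, -1, 0, 1;
               (2 * (s : ℤ) - 5) / 5, 0, 0, -1, 0;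
               ((s : ℤ) - 5) / 5, 0, 0, 1, -1]) := by
  have hs10 : 10 ≤ s := by omega
  have hc2 : ((s - 2 : ℕ) : ℤ) = (s : ℤ) - 2 := by omega
  have hz5 : ((s : ℤ)) % 5 = 0 := by omega
  have hz10 : (10 : ℤ) ≤ (s : ℤ) := by omega
  have hPF : pseudoFrobeniusSet S = {s - 7, s - 4, s - 3, s - 1} := by
    obtain ⟨h0S, haddS, -⟩ := hNS
    obtain ⟨h5S, -, -⟩ := hmul
    obtain ⟨hconge, -⟩ := hcon
    set T : AddSubmonoid ℕ :=
      { carrier := {x | x % 5 = 0 ∨ x = s - 2 ∨ s ≤ x}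
        zero_mem' := by simp
        add_mem' := by
          intro a b ha hb
          simp only [Set.mem_setOf_eq] at *
          omega } with hT
    have hST : ∀ x ∈ S, x % 5 = 0 ∨ x = s - 2 ∨ s ≤ x := by
      intro x hx
      rw [hS] at hx
      have : AddSubmonoid.closure ({5, s - 2, s + 1, s + 2, s + 4} : Set ℕ) ≤ T := by
        rw [AddSubmonoid.closure_le]
        intro y hy
        simp only [Set.mem_insert_iff, Set.mem_singleton_iff] at hy
        show y % 5 = 0 ∨ y = s - 2 ∨ s ≤ y
        omega
      exact this hx
    have hmem : ∀ x : ℕ, x ∈ S ↔ (x % 5 = 0 ∨ x = s - 2 ∨ s ≤ x) := by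
      intro x
      refine ⟨hST x, ?_⟩
      rintro (h | h | h)
      · obtain ⟨k, rfl⟩ : ∃ k, x = 5 * k := ⟨x / 5, by omega⟩
        clear h
        induction k with
        | zero => simpa using h0S
        | succ n ih =>
          have h5n : 5 * (n + 1) = 5 * n + 5 := by ring
          rw [h5n]
          exact haddS _ ih 5 h5S
      · rw [hS]
        exact AddSubmonoid.subset_closure (by simp [h])
      · exact hconge x h
    ext z
    simp only [pseudoFrobeniusSet, Set.mem_setOf_eq, Set.mem_insert_iff, Set.mem_singleton_iff]
    constructor
    · rintro ⟨hz, hall⟩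
      rw [hmem] at hz
      have h5 := hall 5 h5S (by norm_num)
      rw [hmem] at h5
      omega
    · intro hz
      constructor
      · rw [hmem]; omega
      · intro n hn hn0
        rw [hmem] at hn ⊢
        omega
  refine ⟨hPF, fun A => ?_⟩
  clear hPF hNS hArf hmul hcon hS
  constructor
  · rintro ⟨hdiag, hpos, hrow⟩
    have e0 := hrow 0
    have e1 := hrow 1
    have e2 := hrow 2
    have e3 := hrow 3
    have e4 := hrow 4
    simp only [Fin.sum_univ_five, Matrix.cons_val_zero, Matrix.cons_val_one, Matrix.head_cons,
      Matrix.cons_val_two, Matrix.tail_cons, Matrix.cons_val_three, Matrix.cons_val_four,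
      hc2, Nat.cast_add, Nat.cast_ofNat, Nat.cast_one] at e0 e1 e2 e3 e4
    rw [hdiag 0] at e0
    rw [hdiag 1] at e1
    rw [hdiag 2] at e2
    rw [hdiag 3] at e3
    rw [hdiag 4] at e4
    obtain ⟨r01, r02, r03, r04⟩ :=
      rf_row0_s6 (s : ℤ) (A 0 1) (A 0 2) (A 0 3) (A 0 4) hz5 hz10
        (hpos 0 1 (by decide)) (hpos 0 2 (by decide)) (hpos 0 3 (by decide))
        (hpos 0 4 (by decide)) (by linear_combination e0)
    obtain ⟨r10, r12, r13, r14⟩ :=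
      rf_row1_s6 (s : ℤ) (A 1 0) (A 1 2) (A 1 3) (A 1 4) hz5 hz10
        (hpos 1 0 (by decide)) (hpos 1 2 (by decide)) (hpos 1 3 (by decide))
        (hpos 1 4 (by decide)) (by linear_combination e1)
    obtain ⟨r20, r21, r23, r24⟩ :=
      rf_row2_s6 (s : ℤ) (A 2 0) (A 2 1) (A 2 3) (A 2 4) hz5 hz10
        (hpos 2 0 (by decide)) (hpos 2 1 (by decide)) (hpos 2 3 (by decide))
        (hpos 2 4 (by decide)) (by linear_combination e2)
    obtain ⟨r30, r31, r32, r34⟩ :=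
      rf_row3_s6 (s : ℤ) (A 3 0) (A 3 1) (A 3 2) (A 3 4) hz5 hz10
        (hpos 3 0 (by decide)) (hpos 3 1 (by decide)) (hpos 3 2 (by decide))
        (hpos 3 4 (by decide)) (by linear_combination e3)
    obtain ⟨r40, r41, r42, r43⟩ :=
      rf_row4 (s : ℤ) (A 4 0) (A 4 1) (A 4 2) (A 4 3) hz5 hz10
        (hpos 4 0 (by decide)) (hpos 4 1 (by decide)) (hpos 4 2 (by decide))
        (hpos 4 3 (by decide)) (by linear_combination e4)
    ext i j
    fin_cases i <;> fin_cases j <;>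
      simp only [Matrix.cons_val', Matrix.cons_val_zero, Matrix.cons_val_one, Matrix.head_cons,
        Matrix.empty_val', Matrix.cons_val_fin_one, Matrix.head_fin_const, Matrix.cons_val_two,
        Matrix.tail_cons, Matrix.cons_val_three, Matrix.cons_val_four, Matrix.of_apply,
        Fin.isValue] <;>
      first
        | exact hdiag 0 | exact hdiag 1 | exact hdiag 2 | exact hdiag 3 | exact hdiag 4
        | assumption
  · rintro rfl
    refine ⟨?_, ?_, ?_⟩
    · intro i
      fin_cases i <;> simp
    · intro i j hij
      fin_cases i <;> fin_cases j <;>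
        first
          | exact absurd rfl hij
          | (simp [hc2, Matrix.vecHead, Matrix.vecTail]; omega)
          | simp [hc2, Matrix.vecHead, Matrix.vecTail]
    · intro i
      fin_cases i <;> simp [Fin.sum_univ_five, hc2] <;> omega
end

section
/- Let S be an Arf numerical semigroup with multiplicity 5 and conductor s ≥ 5 with s ≡ 0 (mod 5), of the form S = ⟨5, s+1, s+2, s+3, s+4⟩. Then PF(S) = {s−4, s−3, s−2, s−1}; the unique RF-matrix of s−4 is the 5×5 matrix with rows (−1, 1, 0, 0, 0), ((s−5)/5, −1, 1, 0, 0), ((s−5)/5, 0, −1, 1, 0), ((s−5)/5, 0, 0, −1, 1), (2s/5, 0, 0, 0, −1); and the unique RF-matrix of s−3 is the matrix with rows (−1, 0, 1, 0, 0), ((s−5)/5, −1, 0, 1, 0), ((s−5)/5, 0, −1, 0, 1), (2s/5, 0, 0, −1, 0), (s/5, 1, 0, 0, −1). -/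
private lemma row_solve (t x0 a b c d T : ℤ) (ht : 1 ≤ t) (hx0 : 0 ≤ x0)
    (ha : 0 ≤ a) (hb : 0 ≤ b) (hc : 0 ≤ c) (hd : 0 ≤ d)
    (hT : T ≤ 10*t + 1)
    (heq : 5*x0 + (5*t+1)*a + (5*t+2)*b + (5*t+3)*c + (5*t+4)*d = T) :
    (a = 0 ∨ a = 1) ∧ (b = 0 ∨ b = 1) ∧ (c = 0 ∨ c = 1) ∧ (d = 0 ∨ d = 1) ∧ a + b + c + d ≤ 1 := by
  have hsum : a + b + c + d ≤ 1 := by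
    by_contra hcon
    push_neg at hcon
    nlinarith [mul_nonneg (by linarith : (0:ℤ) ≤ t) (by linarith : (0:ℤ) ≤ a + b + c + d - 2),
      mul_nonneg (by linarith : (0:ℤ) ≤ t) ha, mul_nonneg (by linarith : (0:ℤ) ≤ t) hb,
      mul_nonneg (by linarith : (0:ℤ) ≤ t) hc, mul_nonneg (by linarith : (0:ℤ) ≤ t) hd]
  omega



set_option maxHeartbeats 1000000 in
/-- Arf numerical semigroup with multiplicity `5`, conductor `s ≥ 5`,
`s ≡ 0 (mod 5)`, of the form `S = ⟨5, s+1, s+2, s+3, s+4⟩`: then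
`PF(S) = {s-4, s-3, s-2, s-1}` and the unique RF-matrices of `s-4` and `s-3`
are as displayed. -/
theorem arf_mult_five_mod_zero_second (S : Set ℕ) (s : ℕ)
    (hNS : IsNumericalSemigroup S) (hArf : IsArf S)
    (hmul : HasMultiplicity S 5) (hcon : HasConductor S s)
    (hs : 5 ≤ s) (hmod : s % 5 = 0)
    (hS : S = (AddSubmonoid.closure ({5, s + 1, s + 2, s + 3, s + 4} : Set ℕ) : Set ℕ)) :
    pseudoFrobeniusSet S = {s - 4, s - 3, s - 2, s - 1} ∧
    (∀ A : Matrix (Fin 5) (Fin 5) ℤ,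
      IsRFMatrix ![5, s + 1, s + 2, s + 3, s + 4] ((s : ℤ) - 4) A ↔
        A = !![-1, 1, 0, 0, 0;
               ((s : ℤ) - 5) / 5, -1, 1, 0, 0;
               ((s : ℤ) - 5) / 5, 0, -1, 1, 0;
               ((s : ℤ) - 5) / 5, 0, 0, -1, 1;
               2 * (s : ℤ) / 5, 0, 0, 0, -1]) ∧
    (∀ A : Matrix (Fin 5) (Fin 5) ℤ,
      IsRFMatrix ![5, s + 1, s + 2, s + 3, s + 4] ((s : ℤ) - 3) A ↔
        A = !![-1, 0, 1, 0, 0;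
               ((s : ℤ) - 5) / 5, -1, 0, 1, 0;
               ((s : ℤ) - 5) / 5, 0, -1, 0, 1;
               2 * (s : ℤ) / 5, 0, 0, -1, 0;
               (s : ℤ) / 5, 1, 0, 0, -1]) := by
  have hT : S = {n : ℕ | 5 ∣ n ∨ s ≤ n} := by
    apply subset_antisymm
    · rw [hS]
      intro x hx
      let M : AddSubmonoid ℕ :=
        { carrier := {n : ℕ | 5 ∣ n ∨ s ≤ n}
          add_mem' := by intro a b ha hb; simp only [Set.mem_setOf_eq] at *; omega
          zero_mem' := Or.inl ⟨0, rfl⟩ }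
      have : x ∈ M := by
        refine AddSubmonoid.closure_le.mpr ?_ hx
        rintro y hy
        simp only [Set.mem_insert_iff, Set.mem_singleton_iff] at hy
        show 5 ∣ y ∨ s ≤ y
        omega
      exact this
    · intro n hn
      simp only [Set.mem_setOf_eq] at hn
      rw [hS]
      have h5 : (5:ℕ) ∈ AddSubmonoid.closure ({5, s + 1, s + 2, s + 3, s + 4} : Set ℕ) :=
        AddSubmonoid.subset_closure (by simp)
      have hmul5 : ∀ k, 5*k ∈ AddSubmonoid.closure ({5, s + 1, s + 2, s + 3, s + 4} : Set ℕ) := by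
        intro k
        have := nsmul_mem h5 k
        simpa [nsmul_eq_mul, mul_comm] using this
      have hr : n % 5 = 0 ∨ ((n % 5 = 1 ∨ n % 5 = 2 ∨ n % 5 = 3 ∨ n % 5 = 4) ∧ s ≤ n) := by omega
      rcases hr with hr | ⟨hr, hsn⟩
      · obtain ⟨k, rfl⟩ : ∃ k, n = 5*k := ⟨n/5, by omega⟩
        exact hmul5 k
      · obtain ⟨k, hk⟩ : ∃ k, n = (s + n % 5) + 5*k := ⟨(n - s - n % 5)/5, by omega⟩
        rw [hk]
        refine AddSubmonoid.add_mem _ (AddSubmonoid.subset_closure ?_) (hmul5 k)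
        rcases hr with h|h|h|h <;> rw [h] <;> simp
  obtain ⟨t, hst, htt⟩ : ∃ t : ℤ, (s:ℤ) = 5*t ∧ 1 ≤ t := ⟨(s:ℤ)/5, by omega, by omega⟩
  refine ⟨?_, ?_, ?_⟩
  · ext z
    simp only [pseudoFrobeniusSet, Set.mem_setOf_eq, Set.mem_insert_iff, Set.mem_singleton_iff]
    constructor
    · rintro ⟨hz1, hz2⟩
      rw [hT] at hz1
      simp only [Set.mem_setOf_eq] at hz1
      have h5 := hz2 5 (by rw [hT]; exact Or.inl ⟨1, rfl⟩) (by norm_num)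
      rw [hT] at h5
      simp only [Set.mem_setOf_eq] at h5
      omega
    · intro hz
      constructor
      · rw [hT]; simp only [Set.mem_setOf_eq]; omega
      · intro n hn hn0
        rw [hT] at hn ⊢
        simp only [Set.mem_setOf_eq] at hn ⊢
        omega
  · intro A
    unfold IsRFMatrix
    constructor
    · rintro ⟨hdiag, hpos, hrow⟩
      have h0 := hrow 0; have h1 := hrow 1; have h2 := hrow 2
      have h3 := hrow 3; have h4 := hrow 4
      simp only [Fin.sum_univ_five, Matrix.cons_val_zero, Matrix.cons_val_one, Matrix.head_cons,
      Matrix.cons_val_two, Matrix.tail_cons, Matrix.cons_val_three, Matrix.cons_val_four,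
        Nat.cast_add, Nat.cast_ofNat, Nat.cast_one] at h0 h1 h2 h3 h4
      rw [hst, hdiag 0] at h0
      rw [hst, hdiag 1] at h1
      rw [hst, hdiag 2] at h2
      rw [hst, hdiag 3] at h3
      rw [hst, hdiag 4] at h4
      obtain ⟨ra0, rb0, rc0, rd0, rs0⟩ := row_solve t 0 (A 0 1) (A 0 2) (A 0 3) (A 0 4) (5*t+1)
        htt le_rfl (hpos 0 1 (by decide)) (hpos 0 2 (by decide)) (hpos 0 3 (by decide)) (hpos 0 4 (by decide)) (by omega) (by linear_combination -h0)
      have v0 : A 0 1 = 1 ∧ A 0 2 = 0 ∧ A 0 3 = 0 ∧ A 0 4 = 0 := by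
        rcases ra0 with p0|p0 <;> rcases rb0 with p1|p1 <;> rcases rc0 with p2|p2 <;> rcases rd0 with p3|p3 <;>
          rw [p0, p1, p2, p3] at h0 <;> exact ⟨by omega, by omega, by omega, by omega⟩
      obtain ⟨ra1, rb1, rc1, rd1, rs1⟩ := row_solve t (A 1 0) 0 (A 1 2) (A 1 3) (A 1 4) (10*t-3)
        htt (hpos 1 0 (by decide)) le_rfl (hpos 1 2 (by decide)) (hpos 1 3 (by decide)) (hpos 1 4 (by decide)) (by omega) (by linear_combination -h1)
      have v1 : A 1 0 = ((s:ℤ)-5)/5 ∧ A 1 2 = 1 ∧ A 1 3 = 0 ∧ A 1 4 = 0 := by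
        rcases rb1 with p0|p0 <;> rcases rc1 with p1|p1 <;> rcases rd1 with p2|p2 <;>
          rw [p0, p1, p2] at h1 <;> exact ⟨by omega, by omega, by omega, by omega⟩
      obtain ⟨ra2, rb2, rc2, rd2, rs2⟩ := row_solve t (A 2 0) (A 2 1) 0 (A 2 3) (A 2 4) (10*t-2)
        htt (hpos 2 0 (by decide)) (hpos 2 1 (by decide)) le_rfl (hpos 2 3 (by decide)) (hpos 2 4 (by decide)) (by omega) (by linear_combination -h2)
      have v2 : A 2 0 = ((s:ℤ)-5)/5 ∧ A 2 1 = 0 ∧ A 2 3 = 1 ∧ A 2 4 = 0 := by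
        rcases ra2 with p0|p0 <;> rcases rc2 with p1|p1 <;> rcases rd2 with p2|p2 <;>
          rw [p0, p1, p2] at h2 <;> exact ⟨by omega, by omega, by omega, by omega⟩
      obtain ⟨ra3, rb3, rc3, rd3, rs3⟩ := row_solve t (A 3 0) (A 3 1) (A 3 2) 0 (A 3 4) (10*t-1)
        htt (hpos 3 0 (by decide)) (hpos 3 1 (by decide)) (hpos 3 2 (by decide)) le_rfl (hpos 3 4 (by decide)) (by omega) (by linear_combination -h3)
      have v3 : A 3 0 = ((s:ℤ)-5)/5 ∧ A 3 1 = 0 ∧ A 3 2 = 0 ∧ A 3 4 = 1 := by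
        rcases ra3 with p0|p0 <;> rcases rb3 with p1|p1 <;> rcases rd3 with p2|p2 <;>
          rw [p0, p1, p2] at h3 <;> exact ⟨by omega, by omega, by omega, by omega⟩
      obtain ⟨ra4, rb4, rc4, rd4, rs4⟩ := row_solve t (A 4 0) (A 4 1) (A 4 2) (A 4 3) 0 (10*t)
        htt (hpos 4 0 (by decide)) (hpos 4 1 (by decide)) (hpos 4 2 (by decide)) (hpos 4 3 (by decide)) le_rfl (by omega) (by linear_combination -h4)
      have v4 : A 4 0 = 2*(s:ℤ)/5 ∧ A 4 1 = 0 ∧ A 4 2 = 0 ∧ A 4 3 = 0 := by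
        rcases ra4 with p0|p0 <;> rcases rb4 with p1|p1 <;> rcases rc4 with p2|p2 <;>
          rw [p0, p1, p2] at h4 <;> exact ⟨by omega, by omega, by omega, by omega⟩
      ext i j
      fin_cases i <;> fin_cases j <;>
        first
          | exact hdiag _
          | exact v0.1 | exact v0.2.1 | exact v0.2.2.1 | exact v0.2.2.2
          | exact v1.1 | exact v1.2.1 | exact v1.2.2.1 | exact v1.2.2.2
          | exact v2.1 | exact v2.2.1 | exact v2.2.2.1 | exact v2.2.2.2
          | exact v3.1 | exact v3.2.1 | exact v3.2.2.1 | exact v3.2.2.2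
          | exact v4.1 | exact v4.2.1 | exact v4.2.2.1 | exact v4.2.2.2
    · rintro rfl
      refine ⟨by intro i; fin_cases i <;> rfl, ?_, ?_⟩
      · intro i j hij
        fin_cases i <;> fin_cases j <;>
          first
            | exact absurd rfl hij
            | (simp [Matrix.cons_val_zero, Matrix.cons_val_one, Matrix.head_cons,
                Matrix.cons_val_two, Matrix.tail_cons, Matrix.cons_val_three,
                Matrix.cons_val_four, Matrix.vecHead, Matrix.vecTail] <;>
               omega)
      · intro i
        fin_cases i <;>
          (simp [Fin.sum_univ_five, Matrix.cons_val_zero, Matrix.cons_val_one,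
            Matrix.head_cons, Matrix.cons_val_two, Matrix.tail_cons, Matrix.cons_val_three,
            Matrix.cons_val_four, Matrix.vecHead, Matrix.vecTail]
           push_cast
           omega)
  · intro A
    unfold IsRFMatrix
    constructor
    · rintro ⟨hdiag, hpos, hrow⟩
      have h0 := hrow 0; have h1 := hrow 1; have h2 := hrow 2
      have h3 := hrow 3; have h4 := hrow 4
      simp only [Fin.sum_univ_five, Matrix.cons_val_zero, Matrix.cons_val_one, Matrix.head_cons,
      Matrix.cons_val_two, Matrix.tail_cons, Matrix.cons_val_three, Matrix.cons_val_four,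
        Nat.cast_add, Nat.cast_ofNat, Nat.cast_one] at h0 h1 h2 h3 h4
      rw [hst, hdiag 0] at h0
      rw [hst, hdiag 1] at h1
      rw [hst, hdiag 2] at h2
      rw [hst, hdiag 3] at h3
      rw [hst, hdiag 4] at h4
      obtain ⟨ra0, rb0, rc0, rd0, rs0⟩ := row_solve t 0 (A 0 1) (A 0 2) (A 0 3) (A 0 4) (5*t+2)
        htt le_rfl (hpos 0 1 (by decide)) (hpos 0 2 (by decide)) (hpos 0 3 (by decide)) (hpos 0 4 (by decide)) (by omega) (by linear_combination -h0)
      have v0 : A 0 1 = 0 ∧ A 0 2 = 1 ∧ A 0 3 = 0 ∧ A 0 4 = 0 := by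
        rcases ra0 with p0|p0 <;> rcases rb0 with p1|p1 <;> rcases rc0 with p2|p2 <;> rcases rd0 with p3|p3 <;>
          rw [p0, p1, p2, p3] at h0 <;> exact ⟨by omega, by omega, by omega, by omega⟩
      obtain ⟨ra1, rb1, rc1, rd1, rs1⟩ := row_solve t (A 1 0) 0 (A 1 2) (A 1 3) (A 1 4) (10*t-2)
        htt (hpos 1 0 (by decide)) le_rfl (hpos 1 2 (by decide)) (hpos 1 3 (by decide)) (hpos 1 4 (by decide)) (by omega) (by linear_combination -h1)
      have v1 : A 1 0 = ((s:ℤ)-5)/5 ∧ A 1 2 = 0 ∧ A 1 3 = 1 ∧ A 1 4 = 0 := by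
        rcases rb1 with p0|p0 <;> rcases rc1 with p1|p1 <;> rcases rd1 with p2|p2 <;>
          rw [p0, p1, p2] at h1 <;> exact ⟨by omega, by omega, by omega, by omega⟩
      obtain ⟨ra2, rb2, rc2, rd2, rs2⟩ := row_solve t (A 2 0) (A 2 1) 0 (A 2 3) (A 2 4) (10*t-1)
        htt (hpos 2 0 (by decide)) (hpos 2 1 (by decide)) le_rfl (hpos 2 3 (by decide)) (hpos 2 4 (by decide)) (by omega) (by linear_combination -h2)
      have v2 : A 2 0 = ((s:ℤ)-5)/5 ∧ A 2 1 = 0 ∧ A 2 3 = 0 ∧ A 2 4 = 1 := by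
        rcases ra2 with p0|p0 <;> rcases rc2 with p1|p1 <;> rcases rd2 with p2|p2 <;>
          rw [p0, p1, p2] at h2 <;> exact ⟨by omega, by omega, by omega, by omega⟩
      obtain ⟨ra3, rb3, rc3, rd3, rs3⟩ := row_solve t (A 3 0) (A 3 1) (A 3 2) 0 (A 3 4) (10*t)
        htt (hpos 3 0 (by decide)) (hpos 3 1 (by decide)) (hpos 3 2 (by decide)) le_rfl (hpos 3 4 (by decide)) (by omega) (by linear_combination -h3)
      have v3 : A 3 0 = 2*(s:ℤ)/5 ∧ A 3 1 = 0 ∧ A 3 2 = 0 ∧ A 3 4 = 0 := by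
        rcases ra3 with p0|p0 <;> rcases rb3 with p1|p1 <;> rcases rd3 with p2|p2 <;>
          rw [p0, p1, p2] at h3 <;> exact ⟨by omega, by omega, by omega, by omega⟩
      obtain ⟨ra4, rb4, rc4, rd4, rs4⟩ := row_solve t (A 4 0) (A 4 1) (A 4 2) (A 4 3) 0 (10*t+1)
        htt (hpos 4 0 (by decide)) (hpos 4 1 (by decide)) (hpos 4 2 (by decide)) (hpos 4 3 (by decide)) le_rfl (by omega) (by linear_combination -h4)
      have v4 : A 4 0 = (s:ℤ)/5 ∧ A 4 1 = 1 ∧ A 4 2 = 0 ∧ A 4 3 = 0 := by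
        rcases ra4 with p0|p0 <;> rcases rb4 with p1|p1 <;> rcases rc4 with p2|p2 <;>
          rw [p0, p1, p2] at h4 <;> exact ⟨by omega, by omega, by omega, by omega⟩
      ext i j
      fin_cases i <;> fin_cases j <;>
        first
          | exact hdiag _
          | exact v0.1 | exact v0.2.1 | exact v0.2.2.1 | exact v0.2.2.2
          | exact v1.1 | exact v1.2.1 | exact v1.2.2.1 | exact v1.2.2.2
          | exact v2.1 | exact v2.2.1 | exact v2.2.2.1 | exact v2.2.2.2
          | exact v3.1 | exact v3.2.1 | exact v3.2.2.1 | exact v3.2.2.2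
          | exact v4.1 | exact v4.2.1 | exact v4.2.2.1 | exact v4.2.2.2
    · rintro rfl
      refine ⟨by intro i; fin_cases i <;> rfl, ?_, ?_⟩
      · intro i j hij
        fin_cases i <;> fin_cases j <;>
          first
            | exact absurd rfl hij
            | (simp [Matrix.cons_val_zero, Matrix.cons_val_one, Matrix.head_cons,
                Matrix.cons_val_two, Matrix.tail_cons, Matrix.cons_val_three,
                Matrix.cons_val_four, Matrix.vecHead, Matrix.vecTail] <;>
               omega)
      · intro i
        fin_cases i <;>
          (simp [Fin.sum_univ_five, Matrix.cons_val_zero, Matrix.cons_val_one,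
            Matrix.head_cons, Matrix.cons_val_two, Matrix.tail_cons, Matrix.cons_val_three,
            Matrix.cons_val_four, Matrix.vecHead, Matrix.vecTail]
           push_cast
           omega)
end

section
/- Let S be an Arf numerical semigroup with multiplicity 5 and conductor s > 5 with s ≡ 3 (mod 5). Then S = ⟨5, s, s+1, s+3, s+4⟩, PF(S) = {s−5, s−4, s−2, s−1}, and the unique RF-matrix of the pseudo-Frobenius number s−5 is the 5×5 matrix with rows (−1, 1, 0, 0, 0), ((s−8)/5, −1, 0, 1, 0), ((s−8)/5, 0, −1, 0, 1), ((s−3)/5, 0, 1, −1, 0), ((2s−1)/5, 0, 0, 0, −1). -/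
private lemma row0_s9 (t a1 a2 a3 a4 : ℤ) (h1 : 0 ≤ a1) (h2 : 0 ≤ a2) (h3 : 0 ≤ a3) (h4 : 0 ≤ a4)
    (ht : 0 ≤ t)
    (heq : a1*(5*t+8) + a2*(5*t+9) + a3*(5*t+11) + a4*(5*t+12) = 5*t+8) :
    a1 = 1 ∧ a2 = 0 ∧ a3 = 0 ∧ a4 = 0 := by
  have hσ : a1 + a2 + a3 + a4 ≤ 1 := by nlinarith
  have hcase : (a1=0∧a2=0∧a3=0∧a4=0) ∨ (a1=1∧a2=0∧a3=0∧a4=0) ∨ (a1=0∧a2=1∧a3=0∧a4=0) ∨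
      (a1=0∧a2=0∧a3=1∧a4=0) ∨ (a1=0∧a2=0∧a3=0∧a4=1) := by omega
  rcases hcase with ⟨rfl,rfl,rfl,rfl⟩|⟨rfl,rfl,rfl,rfl⟩|⟨rfl,rfl,rfl,rfl⟩|⟨rfl,rfl,rfl,rfl⟩|⟨rfl,rfl,rfl,rfl⟩ <;>
    ring_nf at heq <;> omega

private lemma row1_s9 (t a0 a2 a3 a4 : ℤ) (h0 : 0 ≤ a0) (h2 : 0 ≤ a2) (h3 : 0 ≤ a3) (h4 : 0 ≤ a4)
    (ht : 0 ≤ t)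
    (heq : 5*a0 + a2*(5*t+9) + a3*(5*t+11) + a4*(5*t+12) = 10*t+11) :
    a0 = t ∧ a2 = 0 ∧ a3 = 1 ∧ a4 = 0 := by
  have hσ : a2 + a3 + a4 ≤ 1 := by nlinarith
  have hcase : (a2=0∧a3=0∧a4=0) ∨ (a2=1∧a3=0∧a4=0) ∨ (a2=0∧a3=1∧a4=0) ∨ (a2=0∧a3=0∧a4=1) := by omega
  rcases hcase with ⟨rfl,rfl,rfl⟩|⟨rfl,rfl,rfl⟩|⟨rfl,rfl,rfl⟩|⟨rfl,rfl,rfl⟩ <;> ring_nf at heq <;> omega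

private lemma row2_s9 (t a0 a1 a3 a4 : ℤ) (h0 : 0 ≤ a0) (h1 : 0 ≤ a1) (h3 : 0 ≤ a3) (h4 : 0 ≤ a4)
    (ht : 0 ≤ t)
    (heq : 5*a0 + a1*(5*t+8) + a3*(5*t+11) + a4*(5*t+12) = 10*t+12) :
    a0 = t ∧ a1 = 0 ∧ a3 = 0 ∧ a4 = 1 := by
  have hσ : a1 + a3 + a4 ≤ 1 := by nlinarith
  have hcase : (a1=0∧a3=0∧a4=0) ∨ (a1=1∧a3=0∧a4=0) ∨ (a1=0∧a3=1∧a4=0) ∨ (a1=0∧a3=0∧a4=1) := by omega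
  rcases hcase with ⟨rfl,rfl,rfl⟩|⟨rfl,rfl,rfl⟩|⟨rfl,rfl,rfl⟩|⟨rfl,rfl,rfl⟩ <;> ring_nf at heq <;> omega

private lemma row3_s9 (t a0 a1 a2 a4 : ℤ) (h0 : 0 ≤ a0) (h1 : 0 ≤ a1) (h2 : 0 ≤ a2) (h4 : 0 ≤ a4)
    (ht : 0 ≤ t)
    (heq : 5*a0 + a1*(5*t+8) + a2*(5*t+9) + a4*(5*t+12) = 10*t+14) :
    a0 = t+1 ∧ a1 = 0 ∧ a2 = 1 ∧ a4 = 0 := by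
  have hσ : a1 + a2 + a4 ≤ 1 := by nlinarith
  have hcase : (a1=0∧a2=0∧a4=0) ∨ (a1=1∧a2=0∧a4=0) ∨ (a1=0∧a2=1∧a4=0) ∨ (a1=0∧a2=0∧a4=1) := by omega
  rcases hcase with ⟨rfl,rfl,rfl⟩|⟨rfl,rfl,rfl⟩|⟨rfl,rfl,rfl⟩|⟨rfl,rfl,rfl⟩ <;> ring_nf at heq <;> omega

private lemma row4 (t a0 a1 a2 a3 : ℤ) (h0 : 0 ≤ a0) (h1 : 0 ≤ a1) (h2 : 0 ≤ a2) (h3 : 0 ≤ a3)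
    (ht : 0 ≤ t)
    (heq : 5*a0 + a1*(5*t+8) + a2*(5*t+9) + a3*(5*t+11) = 10*t+15) :
    a0 = 2*t+3 ∧ a1 = 0 ∧ a2 = 0 ∧ a3 = 0 := by
  have hσ : a1 + a2 + a3 ≤ 1 := by nlinarith
  have hcase : (a1=0∧a2=0∧a3=0) ∨ (a1=1∧a2=0∧a3=0) ∨ (a1=0∧a2=1∧a3=0) ∨ (a1=0∧a2=0∧a3=1) := by omega
  rcases hcase with ⟨rfl,rfl,rfl⟩|⟨rfl,rfl,rfl⟩|⟨rfl,rfl,rfl⟩|⟨rfl,rfl,rfl⟩ <;> ring_nf at heq <;> omega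

set_option maxHeartbeats 1600000 in
/-- Arf numerical semigroup with multiplicity `5`, conductor `s > 5`,
`s ≡ 3 (mod 5)`: `S = ⟨5, s, s+1, s+3, s+4⟩`, `PF(S) = {s-5, s-4, s-2, s-1}`, and the
unique RF-matrix of `s-5` is as displayed. -/
theorem arf_mult_five_mod_three (S : Set ℕ) (s : ℕ)
    (hNS : IsNumericalSemigroup S) (hArf : IsArf S)
    (hmul : HasMultiplicity S 5) (hcon : HasConductor S s)
    (hs : 5 < s) (hmod : s % 5 = 3) :
    S = (AddSubmonoid.closure ({5, s, s + 1, s + 3, s + 4} : Set ℕ) : Set ℕ) ∧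
    pseudoFrobeniusSet S = {s - 5, s - 4, s - 2, s - 1} ∧
    (∀ A : Matrix (Fin 5) (Fin 5) ℤ,
      IsRFMatrix ![5, s, s + 1, s + 3, s + 4] ((s : ℤ) - 5) A ↔
        A = !![-1, 1, 0, 0, 0;
               ((s : ℤ) - 8) / 5, -1, 0, 1, 0;
               ((s : ℤ) - 8) / 5, 0, -1, 0, 1;
               ((s : ℤ) - 3) / 5, 0, 1, -1, 0;
               (2 * (s : ℤ) - 1) / 5, 0, 0, 0, -1]) := by
  obtain ⟨h0S, hadd, hfin⟩ := hNS
  obtain ⟨h5S, -, hmin⟩ := hmul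
  obtain ⟨hge, hmincon⟩ := hcon
  have hmul5 : ∀ k, 5 * k ∈ S := by
    intro k
    induction k with
    | zero => simpa using h0S
    | succ n ih => have := hadd _ ih _ h5S; simpa [Nat.mul_succ] using this
  have hmem5 : ∀ x : ℕ, x % 5 = 0 → x ∈ S := by
    intro x hx
    have h := hmul5 (x / 5)
    rwa [show 5 * (x / 5) = x by omega] at h
  have hs1 : s - 1 ∉ S := by
    intro h
    have := hmincon (s - 1) (by
      intro n hn
      rcases eq_or_lt_of_le hn with h' | h'
      · rwa [← h']
      · exact hge n (by omega))
    omega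
  have hr2 : ∀ x ∈ S, x < s → x % 5 = 2 → False := by
    intro x hx hlt hm
    have heq : s - 1 = x + 5 * ((s - 1 - x) / 5) := by omega
    exact hs1 (heq ▸ hadd x hx _ (hmul5 _))
  have hr1 : ∀ x ∈ S, x < s → x % 5 = 1 → False := by
    intro x hx hlt hm
    have hx5 : 5 ≤ x := hmin x hx (by omega)
    have h1 : x - 1 ∈ S := hmem5 _ (by omega)
    have h2 := hArf _ h1 _ hx (by omega)
    rw [show 2 * x - (x - 1) = x + 1 by omega] at h2
    exact hr2 _ h2 (by omega) (by omega)
  have hr4 : ∀ x ∈ S, x < s → x % 5 = 4 → False := by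
    intro x hx hlt hm
    have h1 : x + 1 ∈ S := hmem5 _ (by omega)
    have h2 := hArf _ hx _ h1 (by omega)
    rw [show 2 * (x + 1) - x = x + 2 by omega] at h2
    exact hr1 _ h2 (by omega) (by omega)
  have hr3 : ∀ x ∈ S, x < s → x % 5 = 3 → False := by
    intro x hx hlt hm
    have hx5 : 5 ≤ x := hmin x hx (by omega)
    have h1 : x - 3 ∈ S := hmem5 _ (by omega)
    have h2 := hArf _ h1 _ hx (by omega)
    rw [show 2 * x - (x - 3) = x + 3 by omega] at h2
    exact hr1 _ h2 (by omega) (by omega)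
  have hSeq : ∀ x, x ∈ S ↔ (x % 5 = 0 ∨ s ≤ x) := by
    intro x
    constructor
    · intro hx
      by_cases h : s ≤ x
      · exact Or.inr h
      · left
        push_neg at h
        have h5 : x % 5 < 5 := Nat.mod_lt _ (by norm_num)
        interval_cases hm : x % 5
        · rfl
        · exact absurd (hr1 x hx h hm) (by simp)
        · exact absurd (hr2 x hx h hm) (by simp)
        · exact absurd (hr3 x hx h hm) (by simp)
        · exact absurd (hr4 x hx h hm) (by simp)
    · rintro (h | h)
      · exact hmem5 x h
      · exact hge x h
  obtain ⟨t, rfl⟩ : ∃ t, s = 5 * t + 8 := ⟨(s - 8) / 5, by omega⟩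
  refine ⟨?_, ?_, ?_⟩
  · -- S = closure
    ext n
    rw [hSeq]
    constructor
    · rintro (h | h)
      · have h5 : (5 : ℕ) ∈ AddSubmonoid.closure ({5, 5*t+8, 5*t+8 + 1, 5*t+8 + 3, 5*t+8 + 4} : Set ℕ) :=
          AddSubmonoid.subset_closure (by simp)
        have := nsmul_mem h5 (n / 5)
        simp only [smul_eq_mul] at this
        rwa [show n / 5 * 5 = n by omega] at this
      · have hc5 : ∀ k : ℕ, 5 * k ∈ AddSubmonoid.closure ({5, 5*t+8, 5*t+8 + 1, 5*t+8 + 3, 5*t+8 + 4} : Set ℕ) := by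
          intro k
          have h5 : (5 : ℕ) ∈ AddSubmonoid.closure ({5, 5*t+8, 5*t+8 + 1, 5*t+8 + 3, 5*t+8 + 4} : Set ℕ) :=
            AddSubmonoid.subset_closure (by simp)
          have := nsmul_mem h5 k
          simpa [smul_eq_mul, mul_comm] using this
        have hb : ∀ b ∈ ({5, 5*t+8, 5*t+8 + 1, 5*t+8 + 3, 5*t+8 + 4} : Set ℕ),
            b ∈ AddSubmonoid.closure ({5, 5*t+8, 5*t+8 + 1, 5*t+8 + 3, 5*t+8 + 4} : Set ℕ) :=
          fun b hb => AddSubmonoid.subset_closure hb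
        have h5' : n % 5 = 0 ∨ n % 5 = 1 ∨ n % 5 = 2 ∨ n % 5 = 3 ∨ n % 5 = 4 := by omega
        rcases h5' with hm | hm | hm | hm | hm
        · rw [show n = 5*t+8+2 + 5 * ((n - (5*t+8+2)) / 5) by omega]
          exact AddSubmonoid.add_mem _ (hc5 (t+2)) (hc5 _)
        · rw [show n = (5*t+8+3) + 5 * ((n - (5*t+8+3)) / 5) by omega]
          exact AddSubmonoid.add_mem _ (hb _ (by simp)) (hc5 _)
        · rw [show n = (5*t+8+4) + 5 * ((n - (5*t+8+4)) / 5) by omega]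
          exact AddSubmonoid.add_mem _ (hb _ (by simp)) (hc5 _)
        · rw [show n = (5*t+8) + 5 * ((n - (5*t+8)) / 5) by omega]
          exact AddSubmonoid.add_mem _ (hb _ (by simp)) (hc5 _)
        · rw [show n = (5*t+8+1) + 5 * ((n - (5*t+8+1)) / 5) by omega]
          exact AddSubmonoid.add_mem _ (hb _ (by simp)) (hc5 _)
    · intro hn
      induction hn using AddSubmonoid.closure_induction with
      | mem x hx =>
        simp only [Set.mem_insert_iff, Set.mem_singleton_iff] at hx
        omega
      | zero => left; rfl
      | add x y hx hy ihx ihy => omega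
  · -- pseudo-Frobenius set
    ext z
    simp only [pseudoFrobeniusSet, Set.mem_setOf_eq, Set.mem_insert_iff, Set.mem_singleton_iff]
    constructor
    · rintro ⟨hzn, hall⟩
      have h1 : ¬(z % 5 = 0 ∨ 5*t+8 ≤ z) := fun h => hzn ((hSeq z).2 h)
      have h2 := hall 5 h5S (by omega)
      rw [hSeq] at h2
      omega
    · intro hz
      constructor
      · rw [hSeq]; omega
      · intro n hn hn0
        have h5n : 5 ≤ n := hmin n hn hn0
        exact (hSeq _).2 (Or.inr (by omega))
  · -- RF-matrix
    intro A
    clear hSeq hr4 hr3 hr2 hr1 hs1 hmem5 hmul5 hmincon hge hmin h5S hadd h0S hfin hArf hs hmod S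
    have ht0 : (0:ℤ) ≤ (t:ℤ) := Int.natCast_nonneg t
    constructor
    · rintro ⟨hdiag, hoff, hrow⟩
      have e0 := hrow 0
      have e1 := hrow 1
      have e2 := hrow 2
      have e3 := hrow 3
      have e4 := hrow 4
      simp [Fin.sum_univ_five] at e0 e1 e2 e3 e4
      rw [hdiag 0] at e0
      rw [hdiag 1] at e1
      rw [hdiag 2] at e2
      rw [hdiag 3] at e3
      rw [hdiag 4] at e4
      obtain ⟨g01, g02, g03, g04⟩ := row0_s9 t (A 0 1) (A 0 2) (A 0 3) (A 0 4)
        (hoff 0 1 (by decide)) (hoff 0 2 (by decide)) (hoff 0 3 (by decide)) (hoff 0 4 (by decide))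
        ht0 (by linear_combination -e0)
      obtain ⟨g10, g12, g13, g14⟩ := row1_s9 t (A 1 0) (A 1 2) (A 1 3) (A 1 4)
        (hoff 1 0 (by decide)) (hoff 1 2 (by decide)) (hoff 1 3 (by decide)) (hoff 1 4 (by decide))
        ht0 (by linear_combination -e1)
      obtain ⟨g20, g21, g23, g24⟩ := row2_s9 t (A 2 0) (A 2 1) (A 2 3) (A 2 4)
        (hoff 2 0 (by decide)) (hoff 2 1 (by decide)) (hoff 2 3 (by decide)) (hoff 2 4 (by decide))
        ht0 (by linear_combination -e2)
      obtain ⟨g30, g31, g32, g34⟩ := row3_s9 t (A 3 0) (A 3 1) (A 3 2) (A 3 4)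
        (hoff 3 0 (by decide)) (hoff 3 1 (by decide)) (hoff 3 2 (by decide)) (hoff 3 4 (by decide))
        ht0 (by linear_combination -e3)
      obtain ⟨g40, g41, g42, g43⟩ := row4 t (A 4 0) (A 4 1) (A 4 2) (A 4 3)
        (hoff 4 0 (by decide)) (hoff 4 1 (by decide)) (hoff 4 2 (by decide)) (hoff 4 3 (by decide))
        ht0 (by linear_combination -e4)
      ext i j
      fin_cases i <;> fin_cases j <;>
        simp [Matrix.vecHead, Matrix.vecTail, hdiag, g01, g02, g03, g04, g10, g12, g13, g14,
          g20, g21, g23, g24, g30, g31, g32, g34, g40, g41, g42, g43] <;>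
        push_cast <;> omega
    · rintro rfl
      refine ⟨?_, ?_, ?_⟩
      · intro i
        fin_cases i <;> simp [Matrix.vecHead, Matrix.vecTail]
      · intro i j hij
        fin_cases i <;> fin_cases j <;> simp_all [Matrix.vecHead, Matrix.vecTail] <;> push_cast <;> omega
      · intro i
        fin_cases i <;> simp [Fin.sum_univ_five, Matrix.vecHead, Matrix.vecTail] <;> push_cast <;> omega
end

section
/- Let S be an Arf numerical semigroup with multiplicity 5 and conductor s > 5 with s ≡ 4 (mod 5), of the form S = ⟨5, s−2, s, s+2, s+4⟩. Then PF(S) = {s−7, s−5, s−3, s−1}; the unique RF-matrix of s−7 is the 5×5 matrix with rows (−1, 1, 0, 0, 0), ((s−9)/5, −1, 1, 0, 0), ((s−9)/5, 0, −1, 1, 0), ((s−9)/5, 0, 0, −1, 1), ((2s−3)/5, 0, 0, 0, −1); and the unique RF-matrix of s−5 is the matrix with rows (−1, 0, 1, 0, 0), ((s−9)/5, −1, 0, 1, 0), ((s−9)/5, 0, −1, 0, 1), ((2s−3)/5, 0, 0, −1, 0), ((s+1)/5, 1, 0, 0, −1). -/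
private lemma sumBound (k c1 c2 c3 c4 : ℤ) (hk : 0 ≤ k) (h1 : 0 ≤ c1) (h2 : 0 ≤ c2)
    (h3 : 0 ≤ c3) (h4 : 0 ≤ c4)
    (hle : c1*(5*k+7) + c2*(5*k+9) + c3*(5*k+11) + c4*(5*k+13) ≤ 10*k + 17) :
    c1 + c2 + c3 + c4 ≤ 2 := by
  by_contra h
  push_neg at h
  nlinarith [mul_nonneg (by linarith : (0:ℤ) ≤ c1+c2+c3+c4-3) (by linarith : (0:ℤ) ≤ 5*k+7)]

private lemma r7row0 (k c1 c2 c3 c4 : ℤ) (hk : 0 ≤ k) (h1 : 0 ≤ c1) (h2 : 0 ≤ c2)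
    (h3 : 0 ≤ c3) (h4 : 0 ≤ c4)
    (heq : (-1)*5 + c1*(5*k+7) + c2*(5*k+9) + c3*(5*k+11) + c4*(5*k+13) = 5*k+2) :
    c1 = 1 ∧ c2 = 0 ∧ c3 = 0 ∧ c4 = 0 := by
  have hb := sumBound k c1 c2 c3 c4 hk h1 h2 h3 h4 (by linarith)
  have b1 : c1 ≤ 2 := by linarith
  have b2 : c2 ≤ 2 := by linarith
  have b3 : c3 ≤ 2 := by linarith
  have b4 : c4 ≤ 2 := by linarith
  interval_cases c1 <;> interval_cases c2 <;> interval_cases c3 <;> interval_cases c4 <;> omega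

private lemma r7row1 (k c0 c2 c3 c4 : ℤ) (hk : 0 ≤ k) (h0 : 0 ≤ c0) (h2 : 0 ≤ c2)
    (h3 : 0 ≤ c3) (h4 : 0 ≤ c4)
    (heq : 5*c0 + (-1)*(5*k+7) + c2*(5*k+9) + c3*(5*k+11) + c4*(5*k+13) = 5*k+2) :
    c0 = k ∧ c2 = 1 ∧ c3 = 0 ∧ c4 = 0 := by
  have hb := sumBound k 0 c2 c3 c4 hk le_rfl h2 h3 h4 (by linarith)
  have b2 : c2 ≤ 2 := by linarith
  have b3 : c3 ≤ 2 := by linarith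
  have b4 : c4 ≤ 2 := by linarith
  interval_cases c2 <;> interval_cases c3 <;> interval_cases c4 <;> omega

private lemma r7row2 (k c0 c1 c3 c4 : ℤ) (hk : 0 ≤ k) (h0 : 0 ≤ c0) (h1 : 0 ≤ c1)
    (h3 : 0 ≤ c3) (h4 : 0 ≤ c4)
    (heq : 5*c0 + c1*(5*k+7) + (-1)*(5*k+9) + c3*(5*k+11) + c4*(5*k+13) = 5*k+2) :
    c0 = k ∧ c1 = 0 ∧ c3 = 1 ∧ c4 = 0 := by
  have hb := sumBound k c1 0 c3 c4 hk h1 le_rfl h3 h4 (by linarith)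
  have b1 : c1 ≤ 2 := by linarith
  have b3 : c3 ≤ 2 := by linarith
  have b4 : c4 ≤ 2 := by linarith
  interval_cases c1 <;> interval_cases c3 <;> interval_cases c4 <;> omega

private lemma r7row3 (k c0 c1 c2 c4 : ℤ) (hk : 0 ≤ k) (h0 : 0 ≤ c0) (h1 : 0 ≤ c1)
    (h2 : 0 ≤ c2) (h4 : 0 ≤ c4)
    (heq : 5*c0 + c1*(5*k+7) + c2*(5*k+9) + (-1)*(5*k+11) + c4*(5*k+13) = 5*k+2) :
    c0 = k ∧ c1 = 0 ∧ c2 = 0 ∧ c4 = 1 := by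
  have hb := sumBound k c1 c2 0 c4 hk h1 h2 le_rfl h4 (by linarith)
  have b1 : c1 ≤ 2 := by linarith
  have b2 : c2 ≤ 2 := by linarith
  have b4 : c4 ≤ 2 := by linarith
  interval_cases c1 <;> interval_cases c2 <;> interval_cases c4 <;> omega

private lemma r7row4 (k c0 c1 c2 c3 : ℤ) (hk : 0 ≤ k) (h0 : 0 ≤ c0) (h1 : 0 ≤ c1)
    (h2 : 0 ≤ c2) (h3 : 0 ≤ c3)
    (heq : 5*c0 + c1*(5*k+7) + c2*(5*k+9) + c3*(5*k+11) + (-1)*(5*k+13) = 5*k+2) :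
    c0 = 2*k+3 ∧ c1 = 0 ∧ c2 = 0 ∧ c3 = 0 := by
  have hb := sumBound k c1 c2 c3 0 hk h1 h2 h3 le_rfl (by linarith)
  have b1 : c1 ≤ 2 := by linarith
  have b2 : c2 ≤ 2 := by linarith
  have b3 : c3 ≤ 2 := by linarith
  interval_cases c1 <;> interval_cases c2 <;> interval_cases c3 <;> omega

private lemma r5row0 (k c1 c2 c3 c4 : ℤ) (hk : 0 ≤ k) (h1 : 0 ≤ c1) (h2 : 0 ≤ c2)
    (h3 : 0 ≤ c3) (h4 : 0 ≤ c4)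
    (heq : (-1)*5 + c1*(5*k+7) + c2*(5*k+9) + c3*(5*k+11) + c4*(5*k+13) = 5*k+4) :
    c1 = 0 ∧ c2 = 1 ∧ c3 = 0 ∧ c4 = 0 := by
  have hb := sumBound k c1 c2 c3 c4 hk h1 h2 h3 h4 (by linarith)
  have b1 : c1 ≤ 2 := by linarith
  have b2 : c2 ≤ 2 := by linarith
  have b3 : c3 ≤ 2 := by linarith
  have b4 : c4 ≤ 2 := by linarith
  interval_cases c1 <;> interval_cases c2 <;> interval_cases c3 <;> interval_cases c4 <;> omega

private lemma r5row1 (k c0 c2 c3 c4 : ℤ) (hk : 0 ≤ k) (h0 : 0 ≤ c0) (h2 : 0 ≤ c2)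
    (h3 : 0 ≤ c3) (h4 : 0 ≤ c4)
    (heq : 5*c0 + (-1)*(5*k+7) + c2*(5*k+9) + c3*(5*k+11) + c4*(5*k+13) = 5*k+4) :
    c0 = k ∧ c2 = 0 ∧ c3 = 1 ∧ c4 = 0 := by
  have hb := sumBound k 0 c2 c3 c4 hk le_rfl h2 h3 h4 (by linarith)
  have b2 : c2 ≤ 2 := by linarith
  have b3 : c3 ≤ 2 := by linarith
  have b4 : c4 ≤ 2 := by linarith
  interval_cases c2 <;> interval_cases c3 <;> interval_cases c4 <;> omega

private lemma r5row2 (k c0 c1 c3 c4 : ℤ) (hk : 0 ≤ k) (h0 : 0 ≤ c0) (h1 : 0 ≤ c1)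
    (h3 : 0 ≤ c3) (h4 : 0 ≤ c4)
    (heq : 5*c0 + c1*(5*k+7) + (-1)*(5*k+9) + c3*(5*k+11) + c4*(5*k+13) = 5*k+4) :
    c0 = k ∧ c1 = 0 ∧ c3 = 0 ∧ c4 = 1 := by
  have hb := sumBound k c1 0 c3 c4 hk h1 le_rfl h3 h4 (by linarith)
  have b1 : c1 ≤ 2 := by linarith
  have b3 : c3 ≤ 2 := by linarith
  have b4 : c4 ≤ 2 := by linarith
  interval_cases c1 <;> interval_cases c3 <;> interval_cases c4 <;> omega

private lemma r5row3 (k c0 c1 c2 c4 : ℤ) (hk : 0 ≤ k) (h0 : 0 ≤ c0) (h1 : 0 ≤ c1)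
    (h2 : 0 ≤ c2) (h4 : 0 ≤ c4)
    (heq : 5*c0 + c1*(5*k+7) + c2*(5*k+9) + (-1)*(5*k+11) + c4*(5*k+13) = 5*k+4) :
    c0 = 2*k+3 ∧ c1 = 0 ∧ c2 = 0 ∧ c4 = 0 := by
  have hb := sumBound k c1 c2 0 c4 hk h1 h2 le_rfl h4 (by linarith)
  have b1 : c1 ≤ 2 := by linarith
  have b2 : c2 ≤ 2 := by linarith
  have b4 : c4 ≤ 2 := by linarith
  interval_cases c1 <;> interval_cases c2 <;> interval_cases c4 <;> omega

private lemma r5row4 (k c0 c1 c2 c3 : ℤ) (hk : 0 ≤ k) (h0 : 0 ≤ c0) (h1 : 0 ≤ c1)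
    (h2 : 0 ≤ c2) (h3 : 0 ≤ c3)
    (heq : 5*c0 + c1*(5*k+7) + c2*(5*k+9) + c3*(5*k+11) + (-1)*(5*k+13) = 5*k+4) :
    c0 = k+2 ∧ c1 = 1 ∧ c2 = 0 ∧ c3 = 0 := by
  have hb := sumBound k c1 c2 c3 0 hk h1 h2 h3 le_rfl (by linarith)
  have b1 : c1 ≤ 2 := by linarith
  have b2 : c2 ≤ 2 := by linarith
  have b3 : c3 ≤ 2 := by linarith
  interval_cases c1 <;> interval_cases c2 <;> interval_cases c3 <;> omega

private lemma aux_mat7 (k s : ℕ) (hk : s = 5*k+9) (A : Matrix (Fin 5) (Fin 5) ℤ) :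
      IsRFMatrix ![5, s - 2, s, s + 2, s + 4] ((s : ℤ) - 7) A ↔
        A = !![-1, 1, 0, 0, 0;
               ((s : ℤ) - 9) / 5, -1, 1, 0, 0;
               ((s : ℤ) - 9) / 5, 0, -1, 1, 0;
               ((s : ℤ) - 9) / 5, 0, 0, -1, 1;
               (2 * (s : ℤ) - 3) / 5, 0, 0, 0, -1] := by
  subst hk
  have hkk : (0:ℤ) ≤ (k:ℤ) := Int.ofNat_nonneg k
  constructor
  · rintro ⟨hd, hnn, hrow⟩
    have e0 := hrow 0; have e1 := hrow 1; have e2 := hrow 2; have e3 := hrow 3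
    have e4 := hrow 4
    rw [Fin.sum_univ_five] at e0 e1 e2 e3 e4
    simp only [Matrix.cons_val_zero, Matrix.cons_val_one, Matrix.head_cons,
      Matrix.cons_val_two, Matrix.tail_cons, Matrix.cons_val_three,
      Matrix.cons_val_four] at e0 e1 e2 e3 e4
    push_cast at e0 e1 e2 e3 e4
    rw [hd 0] at e0; rw [hd 1] at e1; rw [hd 2] at e2; rw [hd 3] at e3; rw [hd 4] at e4
    obtain ⟨v1, v2, v3, v4⟩ := r7row0 k (A 0 1) (A 0 2) (A 0 3) (A 0 4) hkk
      (hnn 0 1 (by decide)) (hnn 0 2 (by decide)) (hnn 0 3 (by decide)) (hnn 0 4 (by decide))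
      (by linarith)
    obtain ⟨w0, w2, w3, w4⟩ := r7row1 k (A 1 0) (A 1 2) (A 1 3) (A 1 4) hkk
      (hnn 1 0 (by decide)) (hnn 1 2 (by decide)) (hnn 1 3 (by decide)) (hnn 1 4 (by decide))
      (by linarith)
    obtain ⟨x0, x1, x3, x4⟩ := r7row2 k (A 2 0) (A 2 1) (A 2 3) (A 2 4) hkk
      (hnn 2 0 (by decide)) (hnn 2 1 (by decide)) (hnn 2 3 (by decide)) (hnn 2 4 (by decide))
      (by linarith)
    obtain ⟨y0, y1, y2, y4⟩ := r7row3 k (A 3 0) (A 3 1) (A 3 2) (A 3 4) hkk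
      (hnn 3 0 (by decide)) (hnn 3 1 (by decide)) (hnn 3 2 (by decide)) (hnn 3 4 (by decide))
      (by linarith)
    obtain ⟨z0, z1, z2, z3⟩ := r7row4 k (A 4 0) (A 4 1) (A 4 2) (A 4 3) hkk
      (hnn 4 0 (by decide)) (hnn 4 1 (by decide)) (hnn 4 2 (by decide)) (hnn 4 3 (by decide))
      (by linarith)
    have d0 := hd 0; have d1 := hd 1; have d2 := hd 2; have d3 := hd 3; have d4 := hd 4
    ext i j
    fin_cases i <;> fin_cases j <;>
      · try simp [v1, v2, v3, v4, w0, w2, w3, w4, x0, x1, x3, x4, y0, y1, y2, y4,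
          z0, z1, z2, z3, d0, d1, d2, d3, d4]
        try simp [Matrix.vecHead, Matrix.vecTail]
        try push_cast
        try rfl
        try omega
  · rintro rfl
    refine ⟨?_, ?_, ?_⟩
    · intro i
      fin_cases i <;> rfl
    · intro i j hij
      fin_cases i <;> fin_cases j <;>
        · first
            | exact absurd rfl hij
            | (try simp
               try simp [Matrix.vecHead, Matrix.vecTail]
               try push_cast
               try omega)
    · intro i
      fin_cases i <;>
        · rw [Fin.sum_univ_five]
          try simp
          try simp [Matrix.vecHead, Matrix.vecTail]
          try push_cast
          omega

private lemma aux_mat5 (k s : ℕ) (hk : s = 5*k+9) (A : Matrix (Fin 5) (Fin 5) ℤ) :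
      IsRFMatrix ![5, s - 2, s, s + 2, s + 4] ((s : ℤ) - 5) A ↔
        A = !![-1, 0, 1, 0, 0;
               ((s : ℤ) - 9) / 5, -1, 0, 1, 0;
               ((s : ℤ) - 9) / 5, 0, -1, 0, 1;
               (2 * (s : ℤ) - 3) / 5, 0, 0, -1, 0;
               ((s : ℤ) + 1) / 5, 1, 0, 0, -1] := by
  subst hk
  have hkk : (0:ℤ) ≤ (k:ℤ) := Int.ofNat_nonneg k
  constructor
  · rintro ⟨hd, hnn, hrow⟩
    have e0 := hrow 0; have e1 := hrow 1; have e2 := hrow 2; have e3 := hrow 3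
    have e4 := hrow 4
    rw [Fin.sum_univ_five] at e0 e1 e2 e3 e4
    simp only [Matrix.cons_val_zero, Matrix.cons_val_one, Matrix.head_cons,
      Matrix.cons_val_two, Matrix.tail_cons, Matrix.cons_val_three,
      Matrix.cons_val_four] at e0 e1 e2 e3 e4
    push_cast at e0 e1 e2 e3 e4
    rw [hd 0] at e0; rw [hd 1] at e1; rw [hd 2] at e2; rw [hd 3] at e3; rw [hd 4] at e4
    obtain ⟨v1, v2, v3, v4⟩ := r5row0 k (A 0 1) (A 0 2) (A 0 3) (A 0 4) hkk
      (hnn 0 1 (by decide)) (hnn 0 2 (by decide)) (hnn 0 3 (by decide)) (hnn 0 4 (by decide))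
      (by linarith)
    obtain ⟨w0, w2, w3, w4⟩ := r5row1 k (A 1 0) (A 1 2) (A 1 3) (A 1 4) hkk
      (hnn 1 0 (by decide)) (hnn 1 2 (by decide)) (hnn 1 3 (by decide)) (hnn 1 4 (by decide))
      (by linarith)
    obtain ⟨x0, x1, x3, x4⟩ := r5row2 k (A 2 0) (A 2 1) (A 2 3) (A 2 4) hkk
      (hnn 2 0 (by decide)) (hnn 2 1 (by decide)) (hnn 2 3 (by decide)) (hnn 2 4 (by decide))
      (by linarith)
    obtain ⟨y0, y1, y2, y4⟩ := r5row3 k (A 3 0) (A 3 1) (A 3 2) (A 3 4) hkk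
      (hnn 3 0 (by decide)) (hnn 3 1 (by decide)) (hnn 3 2 (by decide)) (hnn 3 4 (by decide))
      (by linarith)
    obtain ⟨z0, z1, z2, z3⟩ := r5row4 k (A 4 0) (A 4 1) (A 4 2) (A 4 3) hkk
      (hnn 4 0 (by decide)) (hnn 4 1 (by decide)) (hnn 4 2 (by decide)) (hnn 4 3 (by decide))
      (by linarith)
    have d0 := hd 0; have d1 := hd 1; have d2 := hd 2; have d3 := hd 3; have d4 := hd 4
    ext i j
    fin_cases i <;> fin_cases j <;>
      · try simp [v1, v2, v3, v4, w0, w2, w3, w4, x0, x1, x3, x4, y0, y1, y2, y4,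
          z0, z1, z2, z3, d0, d1, d2, d3, d4]
        try simp [Matrix.vecHead, Matrix.vecTail]
        try push_cast
        try rfl
        try omega
  · rintro rfl
    refine ⟨?_, ?_, ?_⟩
    · intro i
      fin_cases i <;> rfl
    · intro i j hij
      fin_cases i <;> fin_cases j <;>
        · first
            | exact absurd rfl hij
            | (try simp
               try simp [Matrix.vecHead, Matrix.vecTail]
               try push_cast
               try omega)
    · intro i
      fin_cases i <;>
        · rw [Fin.sum_univ_five]
          try simp
          try simp [Matrix.vecHead, Matrix.vecTail]
          try push_cast
          omega

/-- Arf numerical semigroup with multiplicity `5`, conductor `s > 5`,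
`s ≡ 4 (mod 5)`, of the form `S = ⟨5, s-2, s, s+2, s+4⟩`: then
`PF(S) = {s-7, s-5, s-3, s-1}` and the unique RF-matrices of `s-7` and `s-5`
are as displayed. -/
theorem arf_mult_five_mod_four_first (S : Set ℕ) (s : ℕ)
    (hNS : IsNumericalSemigroup S) (hArf : IsArf S)
    (hmul : HasMultiplicity S 5) (hcon : HasConductor S s)
    (hs : 5 < s) (hmod : s % 5 = 4)
    (hS : S = (AddSubmonoid.closure ({5, s - 2, s, s + 2, s + 4} : Set ℕ) : Set ℕ)) :
    pseudoFrobeniusSet S = {s - 7, s - 5, s - 3, s - 1} ∧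
    (∀ A : Matrix (Fin 5) (Fin 5) ℤ,
      IsRFMatrix ![5, s - 2, s, s + 2, s + 4] ((s : ℤ) - 7) A ↔
        A = !![-1, 1, 0, 0, 0;
               ((s : ℤ) - 9) / 5, -1, 1, 0, 0;
               ((s : ℤ) - 9) / 5, 0, -1, 1, 0;
               ((s : ℤ) - 9) / 5, 0, 0, -1, 1;
               (2 * (s : ℤ) - 3) / 5, 0, 0, 0, -1]) ∧
    (∀ A : Matrix (Fin 5) (Fin 5) ℤ,
      IsRFMatrix ![5, s - 2, s, s + 2, s + 4] ((s : ℤ) - 5) A ↔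
        A = !![-1, 0, 1, 0, 0;
               ((s : ℤ) - 9) / 5, -1, 0, 1, 0;
               ((s : ℤ) - 9) / 5, 0, -1, 0, 1;
               (2 * (s : ℤ) - 3) / 5, 0, 0, -1, 0;
               ((s : ℤ) + 1) / 5, 1, 0, 0, -1]) := by
  obtain ⟨k, hk⟩ : ∃ k : ℕ, s = 5*k+9 := ⟨(s-9)/5, by omega⟩
  refine ⟨?_, fun A => aux_mat7 k s hk A, fun A => aux_mat5 k s hk A⟩
  subst hk
  have h5m : ∀ m : ℕ, 5*m ∈ S := by
    intro m
    induction m with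
    | zero => simpa using hNS.1
    | succ n ih =>
        have := hNS.2.1 _ ih 5 hmul.1
        have e : 5*n+5 = 5*(n+1) := by ring
        rwa [e] at this
  have hdesc : ∀ n : ℕ, n ∈ S ↔ (n % 5 = 0 ∧ n < 5*k+9) ∨ n = 5*k+7 ∨ 5*k+9 ≤ n := by
    intro n
    constructor
    · intro hn
      rw [hS] at hn
      induction hn using AddSubmonoid.closure_induction with
      | mem x hx =>
          simp only [Set.mem_insert_iff, Set.mem_singleton_iff] at hx
          omega
      | zero => omega
      | add a b _ _ ha hb => omega
    · intro hn
      rcases hn with ⟨h1, _⟩ | h1 | h1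
      · obtain ⟨m, rfl⟩ : ∃ m, n = 5*m := ⟨n/5, by omega⟩
        exact h5m m
      · subst h1
        rw [hS]
        apply AddSubmonoid.subset_closure
        simp only [Set.mem_insert_iff, Set.mem_singleton_iff]
        right; left; omega
      · exact hcon.1 n h1
  ext z
  simp only [pseudoFrobeniusSet, Set.mem_setOf_eq, Set.mem_insert_iff, Set.mem_singleton_iff]
  constructor
  · rintro ⟨hz, hall⟩
    have h1 := hall 5 hmul.1 (by omega)
    rw [hdesc] at hz h1
    omega
  · intro hz
    refine ⟨by rw [hdesc]; omega, ?_⟩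
    intro n hn hn0
    rw [hdesc] at hn ⊢
    omega
end

section
/- Let S be an Arf numerical semigroup with multiplicity 5 and conductor s > 5 with s ≡ 4 (mod 5), of the form S = ⟨5, s, s+2, s+3, s+4⟩. Then PF(S) = {s−5, s−3, s−2, s−1}, and the unique RF-matrix of the pseudo-Frobenius number s−5 is the 5×5 matrix with rows (−1, 1, 0, 0, 0), ((s−9)/5, −1, 0, 0, 1), ((2s−3)/5, 0, −1, 0, 0), ((s−4)/5, 0, 1, −1, 0), ((s−4)/5, 0, 0, 1, −1). -/
lemma row0aux (x b1 b2 b3 b4 : ℤ) (hx : 9 ≤ x)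
    (h1 : 0 ≤ b1) (h2 : 0 ≤ b2) (h3 : 0 ≤ b3) (h4 : 0 ≤ b4)
    (heq : x - 5 = -1 * 5 + b1 * x + b2 * (x + 2) + b3 * (x + 3) + b4 * (x + 4)) :
    b1 = 1 ∧ b2 = 0 ∧ b3 = 0 ∧ b4 = 0 := by
  have ht : b1 + b2 + b3 + b4 ≤ 1 := by
    by_contra h
    have h2' : 2 * x ≤ (b1 + b2 + b3 + b4) * x :=
      mul_le_mul_of_nonneg_right (by omega) (by linarith)
    nlinarith
  have e1 : b1 = 0 ∨ b1 = 1 := by omega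
  have e2 : b2 = 0 ∨ b2 = 1 := by omega
  have e3 : b3 = 0 ∨ b3 = 1 := by omega
  have e4 : b4 = 0 ∨ b4 = 1 := by omega
  rcases e1 with rfl|rfl <;> rcases e2 with rfl|rfl <;> rcases e3 with rfl|rfl <;>
    rcases e4 with rfl|rfl <;> omega

lemma row1aux (x a b2 b3 b4 : ℤ) (hx : 9 ≤ x) (hm : x % 5 = 4)
    (ha : 0 ≤ a) (h2 : 0 ≤ b2) (h3 : 0 ≤ b3) (h4 : 0 ≤ b4)
    (heq : x - 5 = a * 5 + -1 * x + b2 * (x + 2) + b3 * (x + 3) + b4 * (x + 4)) :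
    a = (x - 9) / 5 ∧ b2 = 0 ∧ b3 = 0 ∧ b4 = 1 := by
  have ht : b2 + b3 + b4 ≤ 1 := by
    by_contra h
    have h2' : 2 * x ≤ (b2 + b3 + b4) * x :=
      mul_le_mul_of_nonneg_right (by omega) (by linarith)
    nlinarith
  have e2 : b2 = 0 ∨ b2 = 1 := by omega
  have e3 : b3 = 0 ∨ b3 = 1 := by omega
  have e4 : b4 = 0 ∨ b4 = 1 := by omega
  rcases e2 with rfl|rfl <;> rcases e3 with rfl|rfl <;> rcases e4 with rfl|rfl <;> omega

lemma row2aux (x a b1 b3 b4 : ℤ) (hx : 9 ≤ x) (hm : x % 5 = 4)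
    (ha : 0 ≤ a) (h1 : 0 ≤ b1) (h3 : 0 ≤ b3) (h4 : 0 ≤ b4)
    (heq : x - 5 = a * 5 + b1 * x + -1 * (x + 2) + b3 * (x + 3) + b4 * (x + 4)) :
    a = (2 * x - 3) / 5 ∧ b1 = 0 ∧ b3 = 0 ∧ b4 = 0 := by
  have ht : b1 + b3 + b4 ≤ 1 := by
    by_contra h
    have h2' : 2 * x ≤ (b1 + b3 + b4) * x :=
      mul_le_mul_of_nonneg_right (by omega) (by linarith)
    nlinarith
  have e1 : b1 = 0 ∨ b1 = 1 := by omega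
  have e3 : b3 = 0 ∨ b3 = 1 := by omega
  have e4 : b4 = 0 ∨ b4 = 1 := by omega
  rcases e1 with rfl|rfl <;> rcases e3 with rfl|rfl <;> rcases e4 with rfl|rfl <;> omega

lemma row3aux (x a b1 b2 b4 : ℤ) (hx : 9 ≤ x) (hm : x % 5 = 4)
    (ha : 0 ≤ a) (h1 : 0 ≤ b1) (h2 : 0 ≤ b2) (h4 : 0 ≤ b4)
    (heq : x - 5 = a * 5 + b1 * x + b2 * (x + 2) + -1 * (x + 3) + b4 * (x + 4)) :
    a = (x - 4) / 5 ∧ b1 = 0 ∧ b2 = 1 ∧ b4 = 0 := by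
  have ht : b1 + b2 + b4 ≤ 1 := by
    by_contra h
    have h2' : 2 * x ≤ (b1 + b2 + b4) * x :=
      mul_le_mul_of_nonneg_right (by omega) (by linarith)
    nlinarith
  have e1 : b1 = 0 ∨ b1 = 1 := by omega
  have e2 : b2 = 0 ∨ b2 = 1 := by omega
  have e4 : b4 = 0 ∨ b4 = 1 := by omega
  rcases e1 with rfl|rfl <;> rcases e2 with rfl|rfl <;> rcases e4 with rfl|rfl <;> omega

lemma row4aux (x a b1 b2 b3 : ℤ) (hx : 9 ≤ x) (hm : x % 5 = 4)
    (ha : 0 ≤ a) (h1 : 0 ≤ b1) (h2 : 0 ≤ b2) (h3 : 0 ≤ b3)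
    (heq : x - 5 = a * 5 + b1 * x + b2 * (x + 2) + b3 * (x + 3) + -1 * (x + 4)) :
    a = (x - 4) / 5 ∧ b1 = 0 ∧ b2 = 0 ∧ b3 = 1 := by
  have ht : b1 + b2 + b3 ≤ 1 := by
    by_contra h
    have h2' : 2 * x ≤ (b1 + b2 + b3) * x :=
      mul_le_mul_of_nonneg_right (by omega) (by linarith)
    nlinarith
  have e1 : b1 = 0 ∨ b1 = 1 := by omega
  have e2 : b2 = 0 ∨ b2 = 1 := by omega
  have e3 : b3 = 0 ∨ b3 = 1 := by omega
  rcases e1 with rfl|rfl <;> rcases e2 with rfl|rfl <;> rcases e3 with rfl|rfl <;> omega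

/-- Arf numerical semigroup with multiplicity `5`, conductor `s > 5`,
`s ≡ 4 (mod 5)`, of the form `S = ⟨5, s, s+2, s+3, s+4⟩`: then
`PF(S) = {s-5, s-3, s-2, s-1}` and the unique RF-matrix of `s-5` is as displayed. -/
theorem arf_mult_five_mod_four_second (S : Set ℕ) (s : ℕ)
    (hNS : IsNumericalSemigroup S) (hArf : IsArf S)
    (hmul : HasMultiplicity S 5) (hcon : HasConductor S s)
    (hs : 5 < s) (hmod : s % 5 = 4)
    (hS : S = (AddSubmonoid.closure ({5, s, s + 2, s + 3, s + 4} : Set ℕ) : Set ℕ)) :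
    pseudoFrobeniusSet S = {s - 5, s - 3, s - 2, s - 1} ∧
    (∀ A : Matrix (Fin 5) (Fin 5) ℤ,
      IsRFMatrix ![5, s, s + 2, s + 3, s + 4] ((s : ℤ) - 5) A ↔
        A = !![-1, 1, 0, 0, 0;
               ((s : ℤ) - 9) / 5, -1, 0, 0, 1;
               (2 * (s : ℤ) - 3) / 5, 0, -1, 0, 0;
               ((s : ℤ) - 4) / 5, 0, 1, -1, 0;
               ((s : ℤ) - 4) / 5, 0, 0, 1, -1]) := by
  have hmem : ∀ n, n ∈ S ↔ (n % 5 = 0 ∨ s ≤ n) := by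
    intro n
    constructor
    · intro hn
      rw [hS] at hn
      have : AddSubmonoid.closure ({5, s, s + 2, s + 3, s + 4} : Set ℕ) ≤
          { carrier := {n | n % 5 = 0 ∨ s ≤ n},
            add_mem' := by intro a b ha hb; simp only [Set.mem_setOf_eq] at *; omega,
            zero_mem' := by simp } := by
        apply AddSubmonoid.closure_le.mpr
        intro x hx
        simp only [Set.mem_insert_iff, Set.mem_singleton_iff] at hx
        show x % 5 = 0 ∨ s ≤ x
        omega
      exact this hn
    · intro h
      have h5 : (5:ℕ) ∈ AddSubmonoid.closure ({5, s, s + 2, s + 3, s + 4} : Set ℕ) :=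
        AddSubmonoid.subset_closure (by simp)
      have hmul5 : ∀ t : ℕ, t * 5 ∈ AddSubmonoid.closure ({5, s, s + 2, s + 3, s + 4} : Set ℕ) := by
        intro t
        simpa [nsmul_eq_mul] using AddSubmonoid.nsmul_mem (AddSubmonoid.closure _) h5 t
      have hbase : ∀ x ∈ ({5, s, s+2, s+3, s+4} : Set ℕ), ∀ t : ℕ,
          x + t * 5 ∈ AddSubmonoid.closure ({5, s, s + 2, s + 3, s + 4} : Set ℕ) :=
        fun x hx t => add_mem (AddSubmonoid.subset_closure hx) (hmul5 t)
      rw [hS]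
      rcases h with h0 | hge
      · obtain ⟨t, rfl⟩ : ∃ t, n = t * 5 := ⟨n / 5, by omega⟩
        exact hmul5 t
      · rcases (show n % 5 = 0 ∨ n % 5 = 1 ∨ n % 5 = 2 ∨ n % 5 = 3 ∨ n % 5 = 4 by omega)
          with h|h|h|h|h
        · obtain ⟨t, rfl⟩ : ∃ t, n = t * 5 := ⟨n / 5, by omega⟩
          exact hmul5 t
        · obtain ⟨t, rfl⟩ : ∃ t, n = (s+2) + t * 5 := ⟨(n - (s+2)) / 5, by omega⟩
          exact hbase _ (by simp) t
        · obtain ⟨t, rfl⟩ : ∃ t, n = (s+3) + t * 5 := ⟨(n - (s+3)) / 5, by omega⟩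
          exact hbase _ (by simp) t
        · obtain ⟨t, rfl⟩ : ∃ t, n = (s+4) + t * 5 := ⟨(n - (s+4)) / 5, by omega⟩
          exact hbase _ (by simp) t
        · obtain ⟨t, rfl⟩ : ∃ t, n = s + t * 5 := ⟨(n - s) / 5, by omega⟩
          exact hbase _ (by simp) t
  constructor
  · ext z
    simp only [pseudoFrobeniusSet, Set.mem_setOf_eq, Set.mem_insert_iff, Set.mem_singleton_iff]
    constructor
    · rintro ⟨hz, hall⟩
      rw [hmem] at hz
      have h5 := hall 5 ((hmem 5).mpr (Or.inl rfl)) (by norm_num)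
      rw [hmem] at h5
      omega
    · intro hz
      refine ⟨by rw [hmem]; omega, fun n hn hn0 => ?_⟩
      rw [hmem] at hn ⊢
      omega
  · intro A
    constructor
    · intro h
      obtain ⟨hd, hn, hr⟩ := h
      have hx : (9:ℤ) ≤ (s:ℤ) := by omega
      have hm : (s:ℤ) % 5 = 4 := by omega
      have hr0 := hr 0
      have hr1 := hr 1
      have hr2 := hr 2
      have hr3 := hr 3
      have hr4 := hr 4
      simp only [Fin.sum_univ_five, Matrix.cons_val_zero, Matrix.cons_val_one, Matrix.head_cons,
        Matrix.cons_val_two, Matrix.tail_cons, Matrix.cons_val_three, Matrix.cons_val_four,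
        hd 0, hd 1, hd 2, hd 3, hd 4] at hr0 hr1 hr2 hr3 hr4
      push_cast at hr0 hr1 hr2 hr3 hr4
      obtain ⟨k01, k02, k03, k04⟩ := row0aux (s:ℤ) (A 0 1) (A 0 2) (A 0 3) (A 0 4) hx
        (hn 0 1 (by decide)) (hn 0 2 (by decide)) (hn 0 3 (by decide)) (hn 0 4 (by decide))
        (by linarith)
      obtain ⟨k10, k12, k13, k14⟩ := row1aux (s:ℤ) (A 1 0) (A 1 2) (A 1 3) (A 1 4) hx hm
        (hn 1 0 (by decide)) (hn 1 2 (by decide)) (hn 1 3 (by decide)) (hn 1 4 (by decide))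
        (by linarith)
      obtain ⟨k20, k21, k23, k24⟩ := row2aux (s:ℤ) (A 2 0) (A 2 1) (A 2 3) (A 2 4) hx hm
        (hn 2 0 (by decide)) (hn 2 1 (by decide)) (hn 2 3 (by decide)) (hn 2 4 (by decide))
        (by linarith)
      obtain ⟨k30, k31, k32, k34⟩ := row3aux (s:ℤ) (A 3 0) (A 3 1) (A 3 2) (A 3 4) hx hm
        (hn 3 0 (by decide)) (hn 3 1 (by decide)) (hn 3 2 (by decide)) (hn 3 4 (by decide))
        (by linarith)
      obtain ⟨k40, k41, k42, k43⟩ := row4aux (s:ℤ) (A 4 0) (A 4 1) (A 4 2) (A 4 3) hx hm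
        (hn 4 0 (by decide)) (hn 4 1 (by decide)) (hn 4 2 (by decide)) (hn 4 3 (by decide))
        (by linarith)
      ext i j
      fin_cases i <;> fin_cases j <;>
        simp only [Matrix.cons_val', Matrix.cons_val_zero, Matrix.cons_val_one, Matrix.head_cons,
          Matrix.empty_val', Matrix.cons_val_fin_one, Matrix.head_fin_const, Matrix.cons_val_two,
          Matrix.tail_cons, Matrix.cons_val_three, Matrix.cons_val_four, Matrix.of_apply] <;>
        first
          | exact hd 0 | exact hd 1 | exact hd 2 | exact hd 3 | exact hd 4
          | exact k01 | exact k02 | exact k03 | exact k04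
          | exact k10 | exact k12 | exact k13 | exact k14
          | exact k20 | exact k21 | exact k23 | exact k24
          | exact k30 | exact k31 | exact k32 | exact k34
          | exact k40 | exact k41 | exact k42 | exact k43
    · rintro rfl
      refine ⟨?_, ?_, ?_⟩
      · intro i
        fin_cases i <;> norm_num
      · intro i j hij
        have n0 : (0:ℤ) ≤ 0 := le_refl 0
        have n1 : (0:ℤ) ≤ 1 := by norm_num
        have n2 : (0:ℤ) ≤ ((s:ℤ) - 9) / 5 := by omega
        have n3 : (0:ℤ) ≤ (2 * (s:ℤ) - 3) / 5 := by omega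
        have n4 : (0:ℤ) ≤ ((s:ℤ) - 4) / 5 := by omega
        fin_cases i <;> fin_cases j <;>
          first
            | exact absurd rfl hij
            | exact n0 | exact n1 | exact n2 | exact n3 | exact n4
      · intro i
        fin_cases i <;>
          simp [Fin.sum_univ_five, Matrix.cons_val_zero, Matrix.cons_val_one,
            Matrix.head_cons] <;>
          omega
end

section
/- Let S = ⟨m, s+1, s+2, …, s+m−1⟩ be an Arf numerical semigroup with multiplicity m and conductor s, where s ≡ 0 (mod m). Then PF(S) = {s−m+1, s−m+2, …, s−1}, and for each k ∈ {1, …, m−1}, the m×m integer matrix (a_ij) defined (with generators indexed n₁ = m and n_j = s+j−1 for 2 ≤ j ≤ m) by a_ij = −1 if i = j; a_ij = 1 if i = 1 and j = m−k+1; a_ij = 2s/m if i = k+1 and j = 1; a_ij = (s−m)/m if 1 < i < k+1 and j = 1; a_ij = 1 if 1 < i < k+1 and j = i+m−k; a_ij = s/m if i > k+1 and j = 1; a_ij = 1 if i > k+1 and j = i−k; and a_ij = 0 otherwise, is an RF-matrix of the pseudo-Frobenius number s−k. -/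
/-- The generating set `{m, s+1, s+2, …, s+m-1}`. -/
def arfGenSet (m s : ℕ) : Set ℕ :=
  insert m ((fun i => s + i) '' Set.Icc 1 (m - 1))

lemma rfSumTwo {m : ℕ} (a b : Fin m) (hab : a ≠ b) (f : Fin m → ℤ)
    (h0 : ∀ j, j ≠ a → j ≠ b → f j = 0) : ∑ j, f j = f a + f b := by
  have h : ∑ j ∈ ({a, b} : Finset (Fin m)), f j = ∑ j, f j :=
    Finset.sum_subset (Finset.subset_univ _) (by
      intro x _ hx
      simp only [Finset.mem_insert, Finset.mem_singleton, not_or] at hx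
      exact h0 x hx.1 hx.2)
  rw [← h, Finset.sum_insert (by simpa using hab), Finset.sum_singleton]

lemma rfSumThree {m : ℕ} (a b c : Fin m) (hab : a ≠ b) (hac : a ≠ c) (hbc : b ≠ c)
    (f : Fin m → ℤ)
    (h0 : ∀ j, j ≠ a → j ≠ b → j ≠ c → f j = 0) : ∑ j, f j = f a + f b + f c := by
  have h : ∑ j ∈ ({a, b, c} : Finset (Fin m)), f j = ∑ j, f j :=
    Finset.sum_subset (Finset.subset_univ _) (by
      intro x _ hx
      simp only [Finset.mem_insert, Finset.mem_singleton, not_or] at hx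
      exact h0 x hx.1 hx.2.1 hx.2.2)
  rw [← h, Finset.sum_insert (by simp [hab, hac]), Finset.sum_insert (by simpa using hbc),
    Finset.sum_singleton, add_assoc]

lemma rfRow0 (m s k iv : ℕ) (hi : iv = 0) (hk1 : 1 ≤ k) (jv : ℕ) :
    (if iv = jv then (-1 : ℤ)
      else if iv = 0 ∧ jv + k = m then 1
      else if iv = k ∧ jv = 0 then 2 * (s : ℤ) / (m : ℤ)
      else if 0 < iv ∧ iv < k ∧ jv = 0 then ((s : ℤ) - (m : ℤ)) / (m : ℤ)
      else if 0 < iv ∧ iv < k ∧ jv + k = iv + m then 1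
      else if k < iv ∧ jv = 0 then (s : ℤ) / (m : ℤ)
      else if k < iv ∧ jv + k = iv then 1
      else 0)
    = (if jv = 0 then -1 else if jv + k = m then 1 else 0) := by
  split_ifs <;> first | rfl | (exfalso; omega)

lemma rfRowK (m s k iv : ℕ) (hi : iv = k) (hk1 : 1 ≤ k) (jv : ℕ) :
    (if iv = jv then (-1 : ℤ)
      else if iv = 0 ∧ jv + k = m then 1
      else if iv = k ∧ jv = 0 then 2 * (s : ℤ) / (m : ℤ)
      else if 0 < iv ∧ iv < k ∧ jv = 0 then ((s : ℤ) - (m : ℤ)) / (m : ℤ)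
      else if 0 < iv ∧ iv < k ∧ jv + k = iv + m then 1
      else if k < iv ∧ jv = 0 then (s : ℤ) / (m : ℤ)
      else if k < iv ∧ jv + k = iv then 1
      else 0)
    = (if jv = k then -1 else if jv = 0 then 2 * (s : ℤ) / (m : ℤ) else 0) := by
  split_ifs <;> first | rfl | (exfalso; omega)

lemma rfRowMid (m s k iv : ℕ) (hi1 : 0 < iv) (hi2 : iv < k) (jv : ℕ) :
    (if iv = jv then (-1 : ℤ)
      else if iv = 0 ∧ jv + k = m then 1
      else if iv = k ∧ jv = 0 then 2 * (s : ℤ) / (m : ℤ)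
      else if 0 < iv ∧ iv < k ∧ jv = 0 then ((s : ℤ) - (m : ℤ)) / (m : ℤ)
      else if 0 < iv ∧ iv < k ∧ jv + k = iv + m then 1
      else if k < iv ∧ jv = 0 then (s : ℤ) / (m : ℤ)
      else if k < iv ∧ jv + k = iv then 1
      else 0)
    = (if jv = iv then -1 else if jv = 0 then ((s : ℤ) - (m : ℤ)) / (m : ℤ)
        else if jv + k = iv + m then 1 else 0) := by
  split_ifs <;> first | rfl | (exfalso; omega)

lemma rfRowHigh (m s k iv : ℕ) (hi1 : k < iv) (hk1 : 1 ≤ k) (jv : ℕ) :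
    (if iv = jv then (-1 : ℤ)
      else if iv = 0 ∧ jv + k = m then 1
      else if iv = k ∧ jv = 0 then 2 * (s : ℤ) / (m : ℤ)
      else if 0 < iv ∧ iv < k ∧ jv = 0 then ((s : ℤ) - (m : ℤ)) / (m : ℤ)
      else if 0 < iv ∧ iv < k ∧ jv + k = iv + m then 1
      else if k < iv ∧ jv = 0 then (s : ℤ) / (m : ℤ)
      else if k < iv ∧ jv + k = iv then 1
      else 0)
    = (if jv = iv then -1 else if jv = 0 then (s : ℤ) / (m : ℤ)
        else if jv + k = iv then 1 else 0) := by
  split_ifs <;> first | rfl | (exfalso; omega)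

lemma rfNonneg (m s k iv jv : ℕ) (hij : iv ≠ jv) (hms : m ≤ s) :
    (0 : ℤ) ≤
    (if iv = jv then (-1 : ℤ)
      else if iv = 0 ∧ jv + k = m then 1
      else if iv = k ∧ jv = 0 then 2 * (s : ℤ) / (m : ℤ)
      else if 0 < iv ∧ iv < k ∧ jv = 0 then ((s : ℤ) - (m : ℤ)) / (m : ℤ)
      else if 0 < iv ∧ iv < k ∧ jv + k = iv + m then 1
      else if k < iv ∧ jv = 0 then (s : ℤ) / (m : ℤ)
      else if k < iv ∧ jv + k = iv then 1
      else 0) := by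
  split_ifs <;> first | omega | exact Int.ediv_nonneg (by omega) (by omega)

/-- Let `S = ⟨m, s+1, …, s+m-1⟩` be an Arf numerical semigroup with
multiplicity `m` and conductor `s`, where `m ∣ s`. Then `PF(S) = {s-m+1, …, s-1}` and,
for each `1 ≤ k ≤ m-1`, the displayed matrix is an RF-matrix of `s-k`. (Generators are
indexed by `Fin m`, with index `0 ↔ n₁ = m` and index `j ↔ n_{j+1} = s + j` for `j ≥ 1`;
the paper's index `i ∈ {1, …, m}` corresponds to the Lean index `i - 1`.) -/
theorem arf_multiple_RF (S : Set ℕ) (m s : ℕ)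
    (hNS : IsNumericalSemigroup S) (hArf : IsArf S)
    (hmul : HasMultiplicity S m) (hcon : HasConductor S s)
    (hdvd : m ∣ s)
    (hS : S = (AddSubmonoid.closure (arfGenSet m s) : Set ℕ)) :
    pseudoFrobeniusSet S = Set.Icc (s - m + 1) (s - 1) ∧
    ∀ k : ℕ, 1 ≤ k → k ≤ m - 1 →
      IsRFMatrix (fun j : Fin m => if (j : ℕ) = 0 then m else s + (j : ℕ))
        ((s : ℤ) - (k : ℤ))
        (Matrix.of fun i j : Fin m =>
          if (i : ℕ) = (j : ℕ) then (-1 : ℤ)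
          else if (i : ℕ) = 0 ∧ (j : ℕ) + k = m then 1
          else if (i : ℕ) = k ∧ (j : ℕ) = 0 then 2 * (s : ℤ) / (m : ℤ)
          else if 0 < (i : ℕ) ∧ (i : ℕ) < k ∧ (j : ℕ) = 0 then
            ((s : ℤ) - (m : ℤ)) / (m : ℤ)
          else if 0 < (i : ℕ) ∧ (i : ℕ) < k ∧ (j : ℕ) + k = (i : ℕ) + m then 1
          else if k < (i : ℕ) ∧ (j : ℕ) = 0 then (s : ℤ) / (m : ℤ)
          else if k < (i : ℕ) ∧ (j : ℕ) + k = (i : ℕ) then 1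
          else 0) := by
  have hm0 : m ≠ 0 := hmul.2.1
  have hmulmem : ∀ t : ℕ, m * t ∈ S := by
    intro t; induction t with
    | zero => simpa using hNS.1
    | succ t ih => have := hNS.2.1 _ ih _ hmul.1; simpa [Nat.mul_succ] using this
  have hlt : ∀ n ∈ S, n < s → m ∣ n := by
    intro n hn
    rw [hS] at hn
    induction hn using AddSubmonoid.closure_induction with
    | mem x hx =>
        rcases hx with rfl | ⟨i, hi, rfl⟩
        · exact fun _ => dvd_rfl
        · simp only [Set.mem_Icc] at hi
          simp only at *
          intro h; exact absurd h (by omega)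
    | zero => exact fun _ => dvd_zero m
    | add a b ha hb iha ihb =>
        intro h
        exact Nat.dvd_add (iha (by omega)) (ihb (by omega))
  have hchar : ∀ n, n ∈ S ↔ (m ∣ n ∨ s ≤ n) := by
    intro n
    constructor
    · intro hn
      rcases lt_or_ge n s with h | h
      · exact Or.inl (hlt n hn h)
      · exact Or.inr h
    · rintro (⟨t, rfl⟩ | h)
      · exact hmulmem t
      · exact hcon.1 n h
  constructor
  · -- the pseudo-Frobenius set
    ext z
    simp only [pseudoFrobeniusSet, Set.mem_setOf_eq, Set.mem_Icc]
    constructor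
    · rintro ⟨hzS, hz⟩
      have h1 : ¬(m ∣ z ∨ s ≤ z) := fun h => hzS ((hchar z).2 h)
      push_neg at h1
      obtain ⟨hmz, hzs⟩ := h1
      have hzs' : z < s := by omega
      have hms : m ≤ s := Nat.le_of_dvd (by omega) hdvd
      have hzm : z + m ∈ S := hz m hmul.1 hm0
      rcases (hchar _).1 hzm with h | h
      · exact absurd (by simpa using Nat.dvd_sub h (dvd_refl m)) hmz
      · have hzsm : z ≠ s - m := by
          rintro rfl; exact hmz (Nat.dvd_sub hdvd dvd_rfl)
        omega
    · rintro ⟨hz1, hz2⟩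
      have hs1 : 1 ≤ s := by omega
      have hms : m ≤ s := Nat.le_of_dvd (by omega) hdvd
      constructor
      · intro hzS
        rcases (hchar z).1 hzS with h | h
        · have h2 : m ∣ s - z := Nat.dvd_sub hdvd h
          have h3 : m ≤ s - z := Nat.le_of_dvd (by omega) h2
          omega
        · omega
      · intro n hn hn0
        have := hmul.2.2 n hn hn0
        exact hcon.1 _ (by omega)
  · -- the RF-matrices
    intro k hk1 hk2
    have hm2 : 2 ≤ m := by omega
    have hs0 : 0 < s := by
      by_contra h
      have h1 : 1 ∈ S := hcon.1 1 (by omega)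
      have := hmul.2.2 1 h1 one_ne_zero
      omega
    have hms : m ≤ s := Nat.le_of_dvd hs0 hdvd
    have hkm : k < m := by omega
    have d1 : (m : ℤ) ∣ (s : ℤ) := Int.natCast_dvd_natCast.2 hdvd
    have d2 : (m : ℤ) ∣ 2 * (s : ℤ) := d1.mul_left 2
    have d3 : (m : ℤ) ∣ ((s : ℤ) - (m : ℤ)) := dvd_sub d1 dvd_rfl
    refine ⟨fun i => by simp, ?_, ?_⟩
    · intro i j hij
      have hij' : (i : ℕ) ≠ (j : ℕ) := fun h => hij (Fin.ext h)
      simpa only [Matrix.of_apply] using rfNonneg m s k (i : ℕ) (j : ℕ) hij' hms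
    · intro i
      simp only [Matrix.of_apply]
      obtain ⟨j0, hj0⟩ : ∃ j0 : Fin m, (j0 : ℕ) = 0 := ⟨⟨0, by omega⟩, rfl⟩
      by_cases hi0 : (i : ℕ) = 0
      · -- row 0
        simp only [rfRow0 m s k (i : ℕ) hi0 hk1]
        obtain ⟨b, hbv⟩ : ∃ b : Fin m, (b : ℕ) = m - k := ⟨⟨m - k, by omega⟩, rfl⟩
        rw [rfSumTwo i b (Fin.ne_of_val_ne (by omega))]
        · split_ifs <;> first | (exfalso; omega) | (push_cast; omega)
        · intro j hja hjb
          have hja' : (j : ℕ) ≠ (i : ℕ) := fun h => hja (Fin.ext h)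
          have hjb' : (j : ℕ) ≠ (b : ℕ) := fun h => hjb (Fin.ext h)
          split_ifs <;> first | (exfalso; omega) | omega
      · rcases lt_trichotomy (i : ℕ) k with hik | hik | hik
        · -- middle rows
          simp only [rfRowMid m s k (i : ℕ) (by omega) hik]
          obtain ⟨c, hcv⟩ : ∃ c : Fin m, (c : ℕ) = (i : ℕ) + m - k :=
            ⟨⟨(i : ℕ) + m - k, by omega⟩, rfl⟩
          rw [rfSumThree j0 i c (Fin.ne_of_val_ne (by omega)) (Fin.ne_of_val_ne (by omega))
            (Fin.ne_of_val_ne (by omega))]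
          · split_ifs <;>
              first
                | (exfalso; omega)
                | (rw [Int.ediv_mul_cancel d3]; push_cast; omega)
          · intro j hja hjb hjc
            have hja' : (j : ℕ) ≠ (j0 : ℕ) := fun h => hja (Fin.ext h)
            have hjb' : (j : ℕ) ≠ (i : ℕ) := fun h => hjb (Fin.ext h)
            have hjc' : (j : ℕ) ≠ (c : ℕ) := fun h => hjc (Fin.ext h)
            split_ifs <;> first | (exfalso; omega) | omega
        · -- row k
          simp only [rfRowK m s k (i : ℕ) hik hk1]
          rw [rfSumTwo i j0 (Fin.ne_of_val_ne (by omega))]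
          · split_ifs <;>
              first
                | (exfalso; omega)
                | (rw [Int.ediv_mul_cancel d2]; push_cast; omega)
          · intro j hja hjb
            have hja' : (j : ℕ) ≠ (i : ℕ) := fun h => hja (Fin.ext h)
            have hjb' : (j : ℕ) ≠ (j0 : ℕ) := fun h => hjb (Fin.ext h)
            split_ifs <;> first | (exfalso; omega) | omega
        · -- high rows
          simp only [rfRowHigh m s k (i : ℕ) hik hk1]
          obtain ⟨c, hcv⟩ : ∃ c : Fin m, (c : ℕ) = (i : ℕ) - k :=
            ⟨⟨(i : ℕ) - k, by omega⟩, rfl⟩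
          rw [rfSumThree j0 i c (Fin.ne_of_val_ne (by omega)) (Fin.ne_of_val_ne (by omega))
            (Fin.ne_of_val_ne (by omega))]
          · split_ifs <;>
              first
                | (exfalso; omega)
                | (rw [Int.ediv_mul_cancel d1]; push_cast; omega)
          · intro j hja hjb hjc
            have hja' : (j : ℕ) ≠ (j0 : ℕ) := fun h => hja (Fin.ext h)
            have hjb' : (j : ℕ) ≠ (i : ℕ) := fun h => hjb (Fin.ext h)
            have hjc' : (j : ℕ) ≠ (c : ℕ) := fun h => hjc (Fin.ext h)
            split_ifs <;> first | (exfalso; omega) | omega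
end
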